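/- arXiv:1406.1613 — 5 statements merged into one kernel-verified Lean document; each statement's English description precedes it below -/
import Mathlib

section
/- Green's function identity for the initial value problem at 0: let Λ ∈ ℂ with Re(Λ) > 1/2, let g and w be continuous functions on the real interval [0, a] (a > 0), and suppose w satisfies the integral equation w(z) = (1/(2Λ-1)) ∫₀^z [1 - (t/z)^{2Λ-1}] g(t) dt for all z ∈ (0, a], with w(0) = 0. Then w is twice differentiable on (0, a] and satisfies z w''(z) + 2Λ w'(z) = g(z) there. -/
open MeasureTheory Set

/-- Green's function identity for the IVP at `0`: if `Re Λ > 1/2`,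
`g, w` are continuous on `[0,a]`, `w 0 = 0` and
`w z = (1/(2Λ-1)) ∫₀^z [1 - (t/z)^(2Λ-1)] g t dt` on `(0,a]`, then `w` is twice
differentiable on `(0,a]` and satisfies `z w'' + 2Λ w' = g z` there
(derivatives taken within `(0,a]`). -/
theorem green_identity_at_zero
    (Λ : ℂ) (hΛ : 1 / 2 < Λ.re) (a : ℝ) (ha : 0 < a)
    (g w : ℝ → ℂ)
    (hg : ContinuousOn g (Set.Icc 0 a)) (hw : ContinuousOn w (Set.Icc 0 a))
    (hw0 : w 0 = 0)
    (heq : ∀ z ∈ Set.Ioc (0 : ℝ) a,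
      w z = (1 / (2 * Λ - 1)) *
        ∫ t in (0 : ℝ)..z, (1 - (((t / z : ℝ)) : ℂ) ^ (2 * Λ - 1)) * g t) :
    (∀ z ∈ Set.Ioc (0 : ℝ) a, DifferentiableWithinAt ℝ w (Set.Ioc 0 a) z) ∧
    (∀ z ∈ Set.Ioc (0 : ℝ) a,
      DifferentiableWithinAt ℝ (derivWithin w (Set.Ioc 0 a)) (Set.Ioc 0 a) z) ∧
    (∀ z ∈ Set.Ioc (0 : ℝ) a,
      (z : ℂ) * derivWithin (derivWithin w (Set.Ioc 0 a)) (Set.Ioc 0 a) z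
        + 2 * Λ * derivWithin w (Set.Ioc 0 a) z = g z) := by
  set S : Set ℝ := Set.Ioc 0 a with hS
  set ν : ℂ := 2 * Λ - 1 with hν
  have hνre : 0 < ν.re := by
    have : ν.re = 2 * Λ.re - 1 := by simp [hν]
    rw [this]; linarith
  have hνne : ν ≠ 0 := fun h => by rw [h] at hνre; simp at hνre
  -- clamp
  set c : ℝ → ℝ := fun t => max 0 (min t a) with hc
  have hcmem : ∀ t, c t ∈ Set.Icc 0 a := fun t =>
    ⟨le_max_left _ _, max_le ha.le (min_le_right _ _)⟩
  set G : ℝ → ℂ := fun t => g (c t) with hGdef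
  have hGcont : Continuous G := hg.comp_continuous (by fun_prop) hcmem
  have hGg : ∀ t ∈ Set.Icc 0 a, G t = g t := by
    intro t ht
    have : c t = t := by
      simp only [hc, min_eq_left ht.2, max_eq_right ht.1]
    simp [hGdef, this]
  set φ : ℝ → ℂ := fun t => (t : ℂ) ^ ν * G t with hφdef
  have hφcont : Continuous φ := (Complex.continuous_ofReal_cpow_const hνre).mul hGcont
  set A : ℝ → ℂ := fun z => ∫ t in (0:ℝ)..z, G t with hAdef
  set B : ℝ → ℂ := fun z => ∫ t in (0:ℝ)..z, φ t with hBdef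
  have hA : ∀ z : ℝ, HasDerivAt A (G z) z := fun z =>
    intervalIntegral.integral_hasDerivAt_right (hGcont.intervalIntegrable _ _)
      (hGcont.stronglyMeasurableAtFilter _ _) hGcont.continuousAt
  have hB : ∀ z : ℝ, HasDerivAt B (φ z) z := fun z =>
    intervalIntegral.integral_hasDerivAt_right (hφcont.intervalIntegrable _ _)
      (hφcont.stronglyMeasurableAtFilter _ _) hφcont.continuousAt
  -- key cpow identity
  have key : ∀ z : ℝ, 0 < z → ∀ t : ℝ, 0 ≤ t →
      (((t / z : ℝ)) : ℂ) ^ ν = (z : ℂ) ^ (-ν) * (t : ℂ) ^ ν := by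
    intro z hz t ht
    rcases eq_or_lt_of_le ht with h | h
    · rw [← h]
      simp [Complex.zero_cpow hνne]
    · have h1 : (t / z : ℝ) = t * z⁻¹ := by ring
      rw [h1, Complex.ofReal_mul, Complex.mul_cpow_ofReal_nonneg ht (by positivity)]
      have h2 : ((z⁻¹ : ℝ) : ℂ) = ((z : ℝ) : ℂ)⁻¹ := by push_cast; ring
      rw [h2, Complex.inv_cpow _ _ (by
        rw [Complex.arg_ofReal_of_nonneg hz.le]; exact Real.pi_ne_zero.symm),
        ← Complex.cpow_neg]
      ring
  -- w = F on S
  set F : ℝ → ℂ := fun z => (1 / ν) * (A z - (z : ℂ) ^ (-ν) * B z) with hFdef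
  have hwF : Set.EqOn w F S := by
    intro z hz
    have hz0 : (0:ℝ) < z := hz.1
    have hcong : (∫ t in (0:ℝ)..z, (1 - (((t / z : ℝ)) : ℂ) ^ ν) * g t)
        = ∫ t in (0:ℝ)..z, (G t - (z : ℂ) ^ (-ν) * φ t) := by
      apply intervalIntegral.integral_congr
      intro t ht
      rw [Set.uIcc_of_le hz0.le] at ht
      show (1 - (((t / z : ℝ)) : ℂ) ^ ν) * g t = G t - (z : ℂ) ^ (-ν) * φ t
      rw [key z hz0 t ht.1, ← hGg t ⟨ht.1, ht.2.trans hz.2⟩]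
      simp only [hφdef]
      ring
    have hint1 : IntervalIntegrable G volume 0 z := hGcont.intervalIntegrable _ _
    have hint2 : IntervalIntegrable (fun t => (z : ℂ) ^ (-ν) * φ t) volume 0 z :=
      (hφcont.const_smul ((z : ℂ) ^ (-ν))).intervalIntegrable _ _
    have := heq z hz
    rw [this, hcong, intervalIntegral.integral_sub hint1 hint2,
      intervalIntegral.integral_const_mul]
  -- first derivative
  set W1 : ℝ → ℂ := fun z => (z : ℂ) ^ (-ν - 1) * B z with hW1def
  have hcpow : ∀ (d : ℂ) (z : ℝ), 0 < z →
      HasDerivAt (fun y : ℝ => (y : ℂ) ^ d) (d * (z : ℂ) ^ (d - 1)) z := by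
    intro d z hz
    exact ((Complex.hasStrictDerivAt_cpow_const
      (Complex.ofReal_mem_slitPlane.2 hz)).hasDerivAt).comp_ofReal
  have hu0 : ∀ z : ℝ, 0 < z → ((z : ℝ) : ℂ) ≠ 0 := fun z hz => by
    simpa using ne_of_gt hz
  have hmul : ∀ (z : ℝ), 0 < z → ∀ d : ℂ, (z : ℂ) * (z : ℂ) ^ d = (z : ℂ) ^ (d + 1) := by
    intro z hz d
    rw [Complex.cpow_add _ _ (hu0 z hz), Complex.cpow_one]; ring
  have hFW1 : ∀ z ∈ S, HasDerivAt F (W1 z) z := by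
    intro z hz
    have hz0 : (0:ℝ) < z := hz.1
    have hd : HasDerivAt F
        ((1 / ν) * (G z - ((-ν * (z : ℂ) ^ (-ν - 1)) * B z + (z : ℂ) ^ (-ν) * φ z))) z := by
      have h1 : HasDerivAt (fun y : ℝ => (y : ℂ) ^ (-ν)) (-ν * (z : ℂ) ^ (-ν - 1)) z :=
        hcpow (-ν) z hz0
      exact ((hA z).sub (h1.mul (hB z))).const_mul (1 / ν)
    have heqd : (1 / ν) * (G z - ((-ν * (z : ℂ) ^ (-ν - 1)) * B z + (z : ℂ) ^ (-ν) * φ z))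
        = W1 z := by
      have e3 : (z : ℂ) ^ (-ν) * (z : ℂ) ^ ν = 1 := by
        rw [← Complex.cpow_add _ _ (hu0 z hz0)]; simp
      have e4 : (z : ℂ) ^ (-ν) * ((z : ℂ) ^ ν * G z) = G z := by
        rw [← mul_assoc, e3, one_mul]
      simp only [hW1def, hφdef]
      rw [e4]
      field_simp
      ring
    rw [← heqd]
    exact hd
  have hwd : ∀ z ∈ S, HasDerivWithinAt w (W1 z) S z := by
    intro z hz
    exact ((hFW1 z hz).hasDerivWithinAt).congr hwF (hwF hz)
  have hUD : UniqueDiffOn ℝ S := uniqueDiffOn_Ioc 0 a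
  have hwd' : ∀ z ∈ S, derivWithin w S z = W1 z := fun z hz =>
    (hwd z hz).derivWithin (hUD z hz)
  refine ⟨fun z hz => (hwd z hz).differentiableWithinAt, ?_, ?_⟩
  · intro z hz
    have hz0 : (0:ℝ) < z := hz.1
    have hd2 : HasDerivAt W1
        (((-ν - 1) * (z : ℂ) ^ (-ν - 1 - 1)) * B z + (z : ℂ) ^ (-ν - 1) * φ z) z :=
      (hcpow (-ν - 1) z hz0).mul (hB z)
    exact ((hd2.hasDerivWithinAt).congr hwd' (hwd' z hz)).differentiableWithinAt
  · intro z hz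
    have hz0 : (0:ℝ) < z := hz.1
    have hd2 : HasDerivAt W1
        (((-ν - 1) * (z : ℂ) ^ (-ν - 1 - 1)) * B z + (z : ℂ) ^ (-ν - 1) * φ z) z :=
      (hcpow (-ν - 1) z hz0).mul (hB z)
    have hD2 : derivWithin (derivWithin w S) S z
        = ((-ν - 1) * (z : ℂ) ^ (-ν - 1 - 1)) * B z + (z : ℂ) ^ (-ν - 1) * φ z :=
      ((hd2.hasDerivWithinAt).congr hwd' (hwd' z hz)).derivWithin (hUD z hz)
    rw [hD2, hwd' z hz]
    have e1 : (z : ℂ) * (z : ℂ) ^ (-ν - 1 - 1) = (z : ℂ) ^ (-ν - 1) := by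
      rw [hmul z hz0]; congr 1; ring
    have e2 : (z : ℂ) * (z : ℂ) ^ (-ν - 1) = (z : ℂ) ^ (-ν) := by
      rw [hmul z hz0]; congr 1; ring
    have e3 : (z : ℂ) ^ (-ν) * (z : ℂ) ^ ν = 1 := by
      rw [← Complex.cpow_add _ _ (hu0 z hz0)]; simp
    have hgz : g z = G z := (hGg z ⟨hz0.le, hz.2⟩).symm
    rw [hgz]
    simp only [hW1def, hφdef]
    have h2Λ : 2 * Λ = ν + 1 := by rw [hν]; ring
    rw [h2Λ]
    linear_combination ((-ν - 1) * B ↑z) * e1 + ((z:ℂ) ^ ν * G z) * e2 + (G z) * e3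
end

section
/- Iterated contraction bound: let Λ ∈ ℂ with Re(Λ) > 1/2, let g : [0, a] → ℂ be continuous with sup norm ‖g‖_∞, and define for continuous u : [0,a] → ℂ the operator (T u)(z) = (1/(2Λ-1)) ∫₀^z [1 - (t/z)^{2Λ-1}] g(t) u(t) dt. Then for all continuous u, v and all n ≥ 1 and z ∈ [0,a], |(Tⁿu)(z) - (Tⁿv)(z)| ≤ (2z)ⁿ ‖g‖_∞ⁿ / (n! |2Λ-1|ⁿ) · ‖u - v‖_∞. -/
open MeasureTheory intervalIntegral Set Complex

lemma aux_cpow_split {t z : ℝ} (ht : 0 ≤ t) (hz : 0 < z) {w : ℂ} (hw : w ≠ 0) :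
    (((t / z : ℝ)) : ℂ) ^ w = (z : ℂ) ^ (-w) * (t : ℂ) ^ w := by
  rcases ht.eq_or_lt with h | h
  · simp [← h, Complex.zero_cpow hw]
  · have h1 : (((t / z : ℝ)) : ℂ) = ((t : ℝ) : ℂ) * (((z⁻¹ : ℝ)) : ℂ) := by
      push_cast; ring
    rw [h1, Complex.mul_cpow_ofReal_nonneg ht (inv_nonneg.mpr hz.le) w]
    rw [Complex.ofReal_inv, Complex.inv_cpow _ _ (by
      rw [Complex.arg_ofReal_of_nonneg hz.le]; exact Real.pi_ne_zero.symm), ← Complex.cpow_neg]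
    ring

lemma aux_abs_one_sub {t z : ℝ} (ht : 0 < t) (htz : t ≤ z) {w : ℂ} (hw : 0 ≤ w.re) :
    ‖1 - (((t / z : ℝ)) : ℂ) ^ w‖ ≤ 2 := by
  have hz : 0 < z := ht.trans_le htz
  have h1 : ‖(((t / z : ℝ)) : ℂ) ^ w‖ = (t / z) ^ w.re :=
    Complex.norm_cpow_eq_rpow_re_of_pos (div_pos ht hz) w
  have h2 : (t / z) ^ w.re ≤ 1 :=
    Real.rpow_le_one (div_nonneg ht.le hz.le) ((div_le_one hz).mpr htz) hw
  have h3 := norm_sub_le (1 : ℂ) ((((t / z : ℝ)) : ℂ) ^ w)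
  simp only [norm_one] at h3
  rw [h1] at h3
  linarith

/-- Iterated contraction bound: with `Re Λ > 1/2`, `g` continuous on
`[0,a]` with sup norm `‖g‖_∞`, and `(T u)(z) = (1/(2Λ-1)) ∫₀^z [1-(t/z)^(2Λ-1)] g t · u t dt`,
for all continuous `u, v`, all `n ≥ 1` and `z ∈ [0,a]`:
`|(Tⁿu)(z) - (Tⁿv)(z)| ≤ (2z)ⁿ ‖g‖_∞ⁿ / (n! |2Λ-1|ⁿ) · ‖u-v‖_∞`. -/
theorem iterated_contraction_bound
    (Λ : ℂ) (hΛ : 1 / 2 < Λ.re) (a : ℝ) (ha : 0 < a)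
    (g : ℝ → ℂ) (hg : ContinuousOn g (Set.Icc 0 a))
    (T : (ℝ → ℂ) → (ℝ → ℂ))
    (hT : ∀ u z, T u z = (1 / (2 * Λ - 1)) *
      ∫ t in (0 : ℝ)..z, (1 - (((t / z : ℝ)) : ℂ) ^ (2 * Λ - 1)) * g t * u t) :
    ∀ u v : ℝ → ℂ, ContinuousOn u (Set.Icc 0 a) → ContinuousOn v (Set.Icc 0 a) →
      ∀ n : ℕ, 1 ≤ n → ∀ z ∈ Set.Icc (0 : ℝ) a,
        ‖T^[n] u z - T^[n] v z‖ ≤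
          (2 * z) ^ n * (⨆ t : Set.Icc (0 : ℝ) a, ‖g t‖) ^ n /
              (n.factorial * (‖2 * Λ - 1‖) ^ n) *
            (⨆ t : Set.Icc (0 : ℝ) a, ‖u t - v t‖) := by
  intro u v hu hv n hn z hz
  set C : ℝ := ⨆ t : Set.Icc (0 : ℝ) a, ‖g t‖ with hCdef
  set M : ℝ := ⨆ t : Set.Icc (0 : ℝ) a, ‖u t - v t‖ with hMdef
  set K : ℝ := ‖2 * Λ - 1‖ with hKdef
  have hre : 0 < (2 * Λ - 1).re := by
    simp only [Complex.sub_re, Complex.mul_re, Complex.ofReal_re, Complex.one_re,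
      Complex.re_ofNat, Complex.im_ofNat]
    nlinarith
  have hw0 : (2 * Λ - 1) ≠ 0 := by
    intro h; rw [h] at hre; simp at hre
  have hK : 0 < K := norm_pos_iff.mpr hw0
  have μfin : IsFiniteMeasure (volume.restrict (Set.Icc (0:ℝ) a)) :=
    ⟨by rw [Measure.restrict_apply_univ]; exact isCompact_Icc.measure_lt_top⟩
  -- sup bounds
  have hsup : ∀ (f : ℝ → ℂ), ContinuousOn f (Set.Icc 0 a) →
      (∀ t ∈ Set.Icc (0:ℝ) a, ‖f t‖ ≤ ⨆ t : Set.Icc (0:ℝ) a, ‖f t‖) := by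
    intro f hf t ht
    have hbdd : BddAbove (Set.range fun t : Set.Icc (0:ℝ) a => ‖f t‖) := by
      have := (isCompact_Icc.image_of_continuousOn
        (continuous_norm.comp_continuousOn hf)).bddAbove
      rwa [Set.image_eq_range] at this
    exact le_ciSup hbdd ⟨t, ht⟩
  have hCb : ∀ t ∈ Set.Icc (0:ℝ) a, ‖g t‖ ≤ C := hsup g hg
  have hMb : ∀ t ∈ Set.Icc (0:ℝ) a, ‖u t - v t‖ ≤ M := hsup _ (hu.sub hv)
  have hC0 : 0 ≤ C := le_trans (norm_nonneg _) (hCb 0 ⟨le_refl 0, ha.le⟩)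
  have hM0 : 0 ≤ M := le_trans (norm_nonneg _) (hMb 0 ⟨le_refl 0, ha.le⟩)
  -- integrability of the integrand for bounded measurable w
  have hInt : ∀ (w : ℝ → ℂ) (B : ℝ),
      AEStronglyMeasurable w (volume.restrict (Set.Icc (0:ℝ) a)) →
      (∀ t ∈ Set.Icc (0:ℝ) a, ‖w t‖ ≤ B) →
      ∀ z ∈ Set.Icc (0:ℝ) a, IntervalIntegrable
        (fun t => (1 - (((t / z : ℝ)) : ℂ) ^ (2 * Λ - 1)) * g t * w t) volume 0 z := by
    intro w B hm hB z hz
    rw [intervalIntegrable_iff_integrableOn_Ioc_of_le hz.1]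
    have hsub : Set.Ioc (0:ℝ) z ⊆ Set.Icc 0 a := fun t ht => ⟨ht.1.le, ht.2.trans hz.2⟩
    have hmeas : AEStronglyMeasurable
        (fun t => (1 - (((t / z : ℝ)) : ℂ) ^ (2 * Λ - 1)) * g t * w t)
        (volume.restrict (Set.Ioc (0:ℝ) z)) := by
      have h1 : Measurable fun t : ℝ => (((t / z : ℝ)) : ℂ) ^ (2 * Λ - 1) :=
        (Complex.measurable_ofReal.comp (measurable_id.div_const z)).pow measurable_const
      have h2 : AEStronglyMeasurable g (volume.restrict (Set.Ioc (0:ℝ) z)) :=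
        (hg.aestronglyMeasurable measurableSet_Icc).mono_measure
          (Measure.restrict_mono hsub le_rfl)
      have h3 : AEStronglyMeasurable w (volume.restrict (Set.Ioc (0:ℝ) z)) :=
        hm.mono_measure (Measure.restrict_mono hsub le_rfl)
      exact (((measurable_const.sub h1).aestronglyMeasurable).mul h2).mul h3
    refine Integrable.mono' (integrable_const (2 * (C * B))) hmeas ?_
    filter_upwards [ae_restrict_mem measurableSet_Ioc] with t ht
    have htI : t ∈ Set.Icc (0:ℝ) a := hsub ht
    have e1 : ‖1 - (((t / z : ℝ)) : ℂ) ^ (2 * Λ - 1)‖ ≤ 2 :=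
      aux_abs_one_sub ht.1 ht.2 hre.le
    have e2 := hCb t htI
    have e3 := hB t htI
    calc ‖(1 - (((t / z : ℝ)) : ℂ) ^ (2 * Λ - 1)) * g t * w t‖
        = ‖1 - (((t / z : ℝ)) : ℂ) ^ (2 * Λ - 1)‖ * ‖g t‖ *
            ‖w t‖ := by simp [map_mul]
      _ ≤ 2 * C * B := by
          have hB0 : 0 ≤ B := le_trans (norm_nonneg _) e3
          have := mul_le_mul (mul_le_mul e1 e2 (norm_nonneg _) (by norm_num)) e3
            (norm_nonneg _) (by positivity)
          exact this
      _ = 2 * (C * B) := by ring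
  -- pointwise bound on the integrand
  have hptB : ∀ (w : ℝ → ℂ) (B : ℝ), (∀ t ∈ Set.Icc (0:ℝ) a, ‖w t‖ ≤ B) →
      ∀ z ∈ Set.Icc (0:ℝ) a, ∀ x ∈ Set.Ioc (0:ℝ) z,
      ‖(1 - (((x / z : ℝ)) : ℂ) ^ (2 * Λ - 1)) * g x * w x‖ ≤ 2 * C * B := by
    intro w B hB z hz x hx
    have hxI : x ∈ Set.Icc (0:ℝ) a := ⟨hx.1.le, hx.2.trans hz.2⟩
    have hB0 : 0 ≤ B := le_trans (norm_nonneg _) (hB x hxI)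
    calc ‖(1 - (((x / z : ℝ)) : ℂ) ^ (2 * Λ - 1)) * g x * w x‖
        = ‖1 - (((x / z : ℝ)) : ℂ) ^ (2 * Λ - 1)‖ * ‖g x‖ *
            ‖w x‖ := by simp [map_mul]
      _ ≤ 2 * C * B := mul_le_mul
          (mul_le_mul (aux_abs_one_sub hx.1 hx.2 hre.le) (hCb x hxI)
            (norm_nonneg _) (by norm_num))
          (hB x hxI) (norm_nonneg _) (by positivity)
  -- bound on T w
  have hTb : ∀ (w : ℝ → ℂ) (B : ℝ), (∀ t ∈ Set.Icc (0:ℝ) a, ‖w t‖ ≤ B) →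
      ∀ z ∈ Set.Icc (0:ℝ) a, ‖T w z‖ ≤ 1 / K * (2 * C * B * a) := by
    intro w B hB z hz
    have hB0 : 0 ≤ B := le_trans (norm_nonneg _) (hB 0 ⟨le_refl 0, ha.le⟩)
    rw [hT, norm_mul]
    have h1 : ‖1 / (2 * Λ - 1)‖ = 1 / K := by
      rw [norm_div, norm_one]
    have h2 : ‖∫ t in (0:ℝ)..z, (1 - (((t / z : ℝ)) : ℂ) ^ (2 * Λ - 1)) * g t * w t‖ ≤
        2 * C * B * |z - 0| := by
      apply intervalIntegral.norm_integral_le_of_norm_le_const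
      intro x hx
      rw [Set.uIoc_of_le hz.1] at hx
      exact hptB w B hB z hz x hx
    rw [h1]
    have h3 : |z - 0| ≤ a := by rw [sub_zero, _root_.abs_of_nonneg hz.1]; exact hz.2
    calc 1 / K * ‖∫ t in (0:ℝ)..z, (1 - (((t / z : ℝ)) : ℂ) ^ (2 * Λ - 1)) * g t * w t‖
        ≤ 1 / K * (2 * C * B * |z - 0|) := by
          exact mul_le_mul_of_nonneg_left h2 (by positivity)
      _ ≤ 1 / K * (2 * C * B * a) := by
          apply mul_le_mul_of_nonneg_left _ (by positivity)
          exact mul_le_mul_of_nonneg_left h3 (by positivity)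
  -- measurability of T w
  have hTm : ∀ (w : ℝ → ℂ) (B : ℝ),
      AEStronglyMeasurable w (volume.restrict (Set.Icc (0:ℝ) a)) →
      (∀ t ∈ Set.Icc (0:ℝ) a, ‖w t‖ ≤ B) →
      AEStronglyMeasurable (T w) (volume.restrict (Set.Icc (0:ℝ) a)) := by
    intro w B hm hB
    have hB0 : 0 ≤ B := le_trans (norm_nonneg _) (hB 0 ⟨le_refl 0, ha.le⟩)
    set f₁ : ℝ → ℂ := fun t => g t * w t with hf₁def
    set f₂ : ℝ → ℂ := fun t => ((t : ℝ) : ℂ) ^ (2 * Λ - 1) * (g t * w t) with hf₂def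
    have hgm : AEStronglyMeasurable g (volume.restrict (Set.Icc (0:ℝ) a)) := hg.aestronglyMeasurable measurableSet_Icc
    have hf₁m : AEStronglyMeasurable f₁ (volume.restrict (Set.Icc (0:ℝ) a)) := hgm.mul hm
    have hf₁i : IntegrableOn f₁ (Set.Icc (0:ℝ) a) := by
      refine Integrable.mono' (integrable_const (C * B)) hf₁m ?_
      filter_upwards [ae_restrict_mem measurableSet_Icc] with t ht
      calc ‖f₁ t‖ = ‖g t‖ * ‖w t‖ := by
            simp [hf₁def, map_mul]
        _ ≤ C * B := mul_le_mul (hCb t ht) (hB t ht) (norm_nonneg _) hC0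
    have hcpm : Measurable fun t : ℝ => ((t : ℝ) : ℂ) ^ (2 * Λ - 1) :=
      Complex.measurable_ofReal.pow measurable_const
    have hf₂m : AEStronglyMeasurable f₂ (volume.restrict (Set.Icc (0:ℝ) a)) :=
      hcpm.aestronglyMeasurable.mul hf₁m
    have hcpb : ∀ t ∈ Set.Icc (0:ℝ) a,
        ‖((t : ℝ) : ℂ) ^ (2 * Λ - 1)‖ ≤ a ^ (2 * Λ - 1).re := by
      intro t ht
      rcases ht.1.eq_or_lt with h | h
      · rw [← h]
        simp only [Complex.ofReal_zero, Complex.zero_cpow hw0, norm_zero]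
        positivity
      · rw [Complex.norm_cpow_eq_rpow_re_of_pos h]
        exact Real.rpow_le_rpow h.le ht.2 hre.le
    have hf₂i : IntegrableOn f₂ (Set.Icc (0:ℝ) a) := by
      refine Integrable.mono' (integrable_const (a ^ (2 * Λ - 1).re * (C * B))) hf₂m ?_
      filter_upwards [ae_restrict_mem measurableSet_Icc] with t ht
      calc ‖f₂ t‖ = ‖((t : ℝ) : ℂ) ^ (2 * Λ - 1)‖ *
            (‖g t‖ * ‖w t‖) := by
            simp [hf₂def, map_mul, mul_assoc]
        _ ≤ a ^ (2 * Λ - 1).re * (C * B) := mul_le_mul (hcpb t ht)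
            (mul_le_mul (hCb t ht) (hB t ht) (norm_nonneg _) hC0)
            (by positivity) (by positivity)
    have hF : ContinuousOn (fun z => ∫ t in (0:ℝ)..z, f₁ t) (Set.Icc (0:ℝ) a) := by
      have h := intervalIntegral.continuousOn_primitive_interval
        (a := (0:ℝ)) (b := a) (μ := volume) (f := f₁) (by rwa [Set.uIcc_of_le ha.le])
      rwa [Set.uIcc_of_le ha.le] at h
    have hG : ContinuousOn (fun z => ∫ t in (0:ℝ)..z, f₂ t) (Set.Icc (0:ℝ) a) := by
      have h := intervalIntegral.continuousOn_primitive_interval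
        (a := (0:ℝ)) (b := a) (μ := volume) (f := f₂) (by rwa [Set.uIcc_of_le ha.le])
      rwa [Set.uIcc_of_le ha.le] at h
    have hφm : AEStronglyMeasurable (fun z : ℝ => (1 / (2 * Λ - 1)) *
        ((∫ t in (0:ℝ)..z, f₁ t) - ((z : ℝ) : ℂ) ^ ((1 : ℂ) - 2 * Λ) * ∫ t in (0:ℝ)..z, f₂ t))
        (volume.restrict (Set.Icc (0:ℝ) a)) := by
      apply AEStronglyMeasurable.const_mul
      exact (hF.aestronglyMeasurable measurableSet_Icc).sub
        (((Complex.measurable_ofReal.pow measurable_const).aestronglyMeasurable).mul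
          (hG.aestronglyMeasurable measurableSet_Icc))
    refine hφm.congr ?_
    have h0 : ∀ᵐ z ∂(volume.restrict (Set.Icc (0:ℝ) a)), z ≠ 0 := by
      rw [ae_iff]
      have he : {z : ℝ | ¬ z ≠ 0} = {0} := by ext; simp
      rw [he, Measure.restrict_apply (measurableSet_singleton 0)]
      exact measure_mono_null Set.inter_subset_left (measure_singleton 0)
    filter_upwards [ae_restrict_mem measurableSet_Icc, h0] with z hzm hz0
    have hzpos : 0 < z := lt_of_le_of_ne hzm.1 (Ne.symm hz0)
    rw [hT]
    congr 1
    have hIcc : Set.uIcc (0:ℝ) z = Set.Icc 0 z := Set.uIcc_of_le hzpos.le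
    have hsub : Set.Icc (0:ℝ) z ⊆ Set.Icc 0 a := Set.Icc_subset_Icc_right hzm.2
    have hint1 : IntervalIntegrable f₁ volume 0 z :=
      (hf₁i.mono_set (by rw [hIcc]; exact hsub)).intervalIntegrable
    have hint2 : IntervalIntegrable (fun t => ((z : ℝ) : ℂ) ^ ((1 : ℂ) - 2 * Λ) * f₂ t)
        volume 0 z :=
      ((hf₂i.mono_set (by rw [hIcc]; exact hsub)).intervalIntegrable).const_mul _
    have hptw : ∀ t ∈ Set.uIcc (0:ℝ) z,
        (1 - (((t / z : ℝ)) : ℂ) ^ (2 * Λ - 1)) * g t * w t =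
          f₁ t - ((z : ℝ) : ℂ) ^ ((1 : ℂ) - 2 * Λ) * f₂ t := by
      intro t ht
      rw [hIcc] at ht
      rw [aux_cpow_split ht.1 hzpos hw0]
      have hee : ((z : ℝ) : ℂ) ^ (-(2 * Λ - 1)) = ((z : ℝ) : ℂ) ^ ((1 : ℂ) - 2 * Λ) := by
        congr 1; ring
      rw [hee]
      simp only [hf₁def, hf₂def]
      ring
    rw [intervalIntegral.integral_congr hptw, intervalIntegral.integral_sub hint1 hint2,
      intervalIntegral.integral_const_mul]
  -- contraction step
  have hstep : ∀ (w₁ w₂ : ℝ → ℂ) (B₁ B₂ : ℝ),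
      AEStronglyMeasurable w₁ (volume.restrict (Set.Icc (0:ℝ) a)) →
      (∀ t ∈ Set.Icc (0:ℝ) a, ‖w₁ t‖ ≤ B₁) →
      AEStronglyMeasurable w₂ (volume.restrict (Set.Icc (0:ℝ) a)) →
      (∀ t ∈ Set.Icc (0:ℝ) a, ‖w₂ t‖ ≤ B₂) →
      ∀ (D : ℝ) (m : ℕ), 0 ≤ D →
      (∀ t ∈ Set.Icc (0:ℝ) a, ‖w₁ t - w₂ t‖ ≤ D * t ^ m / m.factorial) →
      ∀ z ∈ Set.Icc (0:ℝ) a, ‖T w₁ z - T w₂ z‖ ≤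
        2 * C / K * D * z ^ (m + 1) / (m + 1).factorial := by
    intro w₁ w₂ B₁ B₂ hm1 hB1 hm2 hB2 D m hD hdiff z hz
    have hint1 := hInt w₁ B₁ hm1 hB1 z hz
    have hint2 := hInt w₂ B₂ hm2 hB2 z hz
    have key : T w₁ z - T w₂ z = (1 / (2 * Λ - 1)) *
        ∫ t in (0:ℝ)..z, (1 - (((t / z : ℝ)) : ℂ) ^ (2 * Λ - 1)) * g t * (w₁ t - w₂ t) := by
      rw [hT, hT, ← mul_sub]
      congr 1
      rw [← intervalIntegral.integral_sub hint1 hint2]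
      apply intervalIntegral.integral_congr
      intro t ht
      ring
    rw [key, norm_mul, norm_div, norm_one]
    have hb : ∀ᵐ t ∂(volume.restrict (Set.uIoc (0:ℝ) z)),
        ‖(1 - (((t / z : ℝ)) : ℂ) ^ (2 * Λ - 1)) * g t * (w₁ t - w₂ t)‖ ≤
          2 * C * (D * t ^ m / m.factorial) := by
      filter_upwards [ae_restrict_mem measurableSet_uIoc] with t ht
      rw [Set.uIoc_of_le hz.1] at ht
      have htI : t ∈ Set.Icc (0:ℝ) a := ⟨ht.1.le, ht.2.trans hz.2⟩
      calc ‖(1 - (((t / z : ℝ)) : ℂ) ^ (2 * Λ - 1)) * g t * (w₁ t - w₂ t)‖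
          = ‖1 - (((t / z : ℝ)) : ℂ) ^ (2 * Λ - 1)‖ * ‖g t‖ *
              ‖w₁ t - w₂ t‖ := by simp [map_mul]
        _ ≤ 2 * C * (D * t ^ m / m.factorial) := mul_le_mul
            (mul_le_mul (aux_abs_one_sub ht.1 ht.2 hre.le) (hCb t htI)
              (norm_nonneg _) (by norm_num))
            (hdiff t htI) (norm_nonneg _) (by positivity)
    have hφc : IntervalIntegrable (fun t : ℝ => 2 * C * (D * t ^ m / m.factorial)) volume 0 z :=
      (by fun_prop : Continuous fun t : ℝ => 2 * C * (D * t ^ m / m.factorial)).intervalIntegrable 0 z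
    have hnorm := intervalIntegral.norm_integral_le_abs_of_norm_le hb hφc
    have hval : (∫ t in (0:ℝ)..z, 2 * C * (D * t ^ m / (m.factorial : ℝ))) =
        2 * C * D / (m.factorial : ℝ) * (z ^ (m + 1) / (m + 1)) := by
      have hfun : (fun t : ℝ => 2 * C * (D * t ^ m / (m.factorial : ℝ))) =
          fun t : ℝ => (2 * C * D / (m.factorial : ℝ)) * t ^ m := by funext t; ring
      rw [hfun, intervalIntegral.integral_const_mul, integral_pow]
      rw [zero_pow (Nat.succ_ne_zero m)]
      push_cast
      ring
    have hfac : (0:ℝ) < m.factorial := by positivity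
    calc 1 / K * ‖∫ t in (0:ℝ)..z, (1 - (((t / z : ℝ)) : ℂ) ^ (2 * Λ - 1)) * g t * (w₁ t - w₂ t)‖
        ≤ 1 / K * |∫ t in (0:ℝ)..z, 2 * C * (D * t ^ m / (m.factorial : ℝ))| :=
          mul_le_mul_of_nonneg_left hnorm (by positivity)
      _ = 1 / K * (2 * C * D / (m.factorial : ℝ) * (z ^ (m + 1) / (m + 1))) := by
          rw [hval, _root_.abs_of_nonneg]
          have hz0 : (0:ℝ) ≤ z := hz.1
          positivity
      _ = 2 * C / K * D * z ^ (m + 1) / (m + 1).factorial := by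
          have hKne : K ≠ 0 := hK.ne'
          have hfne : (m.factorial : ℝ) ≠ 0 := hfac.ne'
          have hmne : ((m : ℝ) + 1) ≠ 0 := by positivity
          rw [Nat.factorial_succ]
          push_cast
          rw [div_mul_eq_div_div]
          ring
  -- induction
  have main : ∀ m : ℕ,
      (AEStronglyMeasurable (T^[m] u) (volume.restrict (Set.Icc (0:ℝ) a)) ∧
        ∃ B, ∀ t ∈ Set.Icc (0:ℝ) a, ‖T^[m] u t‖ ≤ B) ∧
      (AEStronglyMeasurable (T^[m] v) (volume.restrict (Set.Icc (0:ℝ) a)) ∧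
        ∃ B, ∀ t ∈ Set.Icc (0:ℝ) a, ‖T^[m] v t‖ ≤ B) ∧
      ∀ t ∈ Set.Icc (0:ℝ) a, ‖T^[m] u t - T^[m] v t‖ ≤
        (2 * C / K) ^ m * M * t ^ m / m.factorial := by
    intro m
    induction m with
    | zero =>
      refine ⟨⟨hu.aestronglyMeasurable measurableSet_Icc, _, hsup u hu⟩,
        ⟨hv.aestronglyMeasurable measurableSet_Icc, _, hsup v hv⟩, ?_⟩
      intro t ht
      simpa using hMb t ht
    | succ m ih =>
      obtain ⟨⟨hmu, Bu, hBu⟩, ⟨hmv, Bv, hBv⟩, hd⟩ := ih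
      refine ⟨⟨?_, ?_⟩, ⟨?_, ?_⟩, ?_⟩
      · rw [Function.iterate_succ_apply']; exact hTm _ Bu hmu hBu
      · refine ⟨1 / K * (2 * C * Bu * a), fun t ht => ?_⟩
        rw [Function.iterate_succ_apply']; exact hTb _ Bu hBu t ht
      · rw [Function.iterate_succ_apply']; exact hTm _ Bv hmv hBv
      · refine ⟨1 / K * (2 * C * Bv * a), fun t ht => ?_⟩
        rw [Function.iterate_succ_apply']; exact hTb _ Bv hBv t ht
      · intro t ht
        rw [Function.iterate_succ_apply', Function.iterate_succ_apply']
        calc ‖T (T^[m] u) t - T (T^[m] v) t‖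
            ≤ 2 * C / K * ((2 * C / K) ^ m * M) * t ^ (m + 1) / (m + 1).factorial :=
              hstep _ _ Bu Bv hmu hBu hmv hBv ((2 * C / K) ^ m * M) m (by positivity) hd t ht
          _ = (2 * C / K) ^ (m + 1) * M * t ^ (m + 1) / (m + 1).factorial := by
              rw [pow_succ]; ring
  -- conclusion
  have hfin := (main n).2.2 z hz
  have hfac : (n.factorial : ℝ) ≠ 0 := by positivity
  have heq : (2 * z) ^ n * C ^ n / ((n.factorial : ℝ) * K ^ n) * M =
      (2 * C / K) ^ n * M * z ^ n / n.factorial := by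
    field_simp
    have hKK : K ^ n * K⁻¹ ^ n = 1 := by rw [← mul_pow, mul_inv_cancel₀ hK.ne', one_pow]
    linear_combination (-(z ^ n * C ^ n * M * 2 ^ n)) * hKK
  rw [heq]
  exact hfin
end

section
/- Existence-uniqueness for the singular nonlinear IVP: let Re(Λ) > 1/2, f : [0,a] × ℂ → ℂ continuous with |f(z,u)-f(z,v)| ≤ L|u-v|, and y₀ ∈ ℂ. Then the integral equation y(z) = y₀ + (1/(2Λ-1)) ∫₀^z [1 - (t/z)^{2Λ-1}] f(t, y(t)) dt has a unique continuous solution y on [0,a], and the iterates yⁿ⁺¹ = y₀ + S yⁿ, y⁰ ≡ y₀, converge uniformly to y with |y(z) - yⁿ(z)| ≤ (2zL/|2Λ-1|)ⁿ/n! · ‖y - y₀‖_∞. -/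
open MeasureTheory Set Filter intervalIntegral

section NEUaux
variable {Λ : ℂ} {a L : ℝ} {f : ℝ → ℂ → ℂ} {S : (ℝ → ℂ) → (ℝ → ℂ)}

-- continuity of composed function
lemma neu_contOn_comp {a : ℝ} {f : ℝ → ℂ → ℂ}
    (hfc : ContinuousOn (fun p : ℝ × ℂ => f p.1 p.2) (Set.Icc 0 a ×ˢ Set.univ))
    {u : ℝ → ℂ} (hu : ContinuousOn u (Set.Icc 0 a)) :
    ContinuousOn (fun t => f t (u t)) (Set.Icc 0 a) :=
  hfc.comp (continuousOn_id.prodMk hu) (fun t ht => Set.mk_mem_prod ht (Set.mem_univ _))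

-- kernel bound
lemma neu_ker_bound {W : ℂ} (hre : 0 < W.re) {t x : ℝ} (ht : 0 < t) (htx : t ≤ x) :
    ‖1 - (((t / x : ℝ)) : ℂ) ^ W‖ ≤ 2 := by
  have hx : 0 < x := lt_of_lt_of_le ht htx
  have hr : 0 < t / x := div_pos ht hx
  have hr1 : t / x ≤ 1 := (div_le_one hx).mpr htx
  calc ‖1 - (((t / x : ℝ)) : ℂ) ^ W‖
      ≤ ‖(1:ℂ)‖ + ‖(((t / x : ℝ)) : ℂ) ^ W‖ := by
        simpa using norm_sub_le (1:ℂ) _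
    _ ≤ 1 + 1 := by
        refine add_le_add (by simp) ?_
        rw [Complex.norm_cpow_eq_rpow_re_of_pos hr]
        exact Real.rpow_le_one hr.le hr1 hre.le
    _ = 2 := by norm_num

-- integrability
lemma neu_intg {Λ : ℂ} (hre : 0 < (2*Λ-1).re) {a : ℝ} {f : ℝ → ℂ → ℂ}
    (hfc : ContinuousOn (fun p : ℝ × ℂ => f p.1 p.2) (Set.Icc 0 a ×ˢ Set.univ))
    {u : ℝ → ℂ} (hu : ContinuousOn u (Set.Icc 0 a)) {z : ℝ} (hz : z ∈ Set.Icc 0 a) :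
    IntervalIntegrable (fun t => (1 - (((t / z : ℝ)) : ℂ) ^ (2*Λ-1)) * f t (u t))
      MeasureTheory.volume 0 z := by
  apply ContinuousOn.intervalIntegrable
  rw [Set.uIcc_of_le hz.1]
  refine ContinuousOn.mul ?_ ((neu_contOn_comp hfc hu).mono (Set.Icc_subset_Icc_right hz.2))
  exact (continuous_const.sub ((Complex.continuous_ofReal_cpow_const hre).comp
    (continuous_id.div_const z))).continuousOn


-- Lemma A: the key difference estimate
lemma neu_key (hre : 0 < (2*Λ-1).re) (hL : 0 ≤ L)
    (hfc : ContinuousOn (fun p : ℝ × ℂ => f p.1 p.2) (Set.Icc 0 a ×ˢ Set.univ))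
    (hflip : ∀ z ∈ Set.Icc (0 : ℝ) a, ∀ u v : ℂ,
      ‖f z u - f z v‖ ≤ L * ‖u - v‖)
    (hS : ∀ u z, S u z = (1 / (2 * Λ - 1)) *
      ∫ t in (0 : ℝ)..z, (1 - (((t / z : ℝ)) : ℂ) ^ (2 * Λ - 1)) * f t (u t))
    {u v : ℝ → ℂ} (hu : ContinuousOn u (Set.Icc 0 a)) (hv : ContinuousOn v (Set.Icc 0 a))
    {z : ℝ} (hz : z ∈ Set.Icc 0 a) {g : ℝ → ℝ} (hg : Continuous g)
    (hbd : ∀ t ∈ Set.Icc 0 z, ‖u t - v t‖ ≤ g t) :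
    ‖S u z - S v z‖ ≤
      (2 * L / ‖2 * Λ - 1‖) * ∫ t in (0:ℝ)..z, g t := by
  have hiu := neu_intg hre hfc hu hz
  have hiv := neu_intg hre hfc hv hz
  have hint : ∫ t in (0:ℝ)..z, (2 * L) * g t = (2 * L) * ∫ t in (0:ℝ)..z, g t :=
    intervalIntegral.integral_const_mul _ _
  have hgpos : 0 ≤ ∫ t in (0:ℝ)..z, g t := by
    apply intervalIntegral.integral_nonneg hz.1
    exact fun t ht => le_trans (norm_nonneg _) (hbd t ht)
  have key : ‖∫ t in (0:ℝ)..z,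
      ((1 - (((t / z : ℝ)) : ℂ) ^ (2*Λ-1)) * f t (u t)
        - (1 - (((t / z : ℝ)) : ℂ) ^ (2*Λ-1)) * f t (v t))‖
      ≤ |∫ t in (0:ℝ)..z, (2 * L) * g t| := by
    apply intervalIntegral.norm_integral_le_abs_of_norm_le
    · rw [Set.uIoc_of_le hz.1]
      filter_upwards [ae_restrict_mem measurableSet_Ioc] with t ht
      have h1 : t ∈ Set.Icc 0 z := Set.Ioc_subset_Icc_self ht
      have h2 : t ∈ Set.Icc 0 a := Set.Icc_subset_Icc_right hz.2 h1
      rw [← mul_sub, norm_mul]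
      calc ‖1 - (((t / z : ℝ)) : ℂ) ^ (2*Λ-1)‖ * ‖f t (u t) - f t (v t)‖
          ≤ 2 * (L * g t) := by
            refine mul_le_mul ?_ ?_ (norm_nonneg _) (by norm_num)
            · exact neu_ker_bound hre ht.1 ht.2
            · exact le_trans (hflip t h2 _ _)
                (mul_le_mul_of_nonneg_left (hbd t h1) hL)
        _ = 2 * L * g t := by ring
    · exact (continuous_const.mul hg).intervalIntegrable _ _
  rw [hS u z, hS v z, ← mul_sub, ← intervalIntegral.integral_sub hiu hiv, norm_mul]
  rw [norm_div, norm_one]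
  calc 1 / ‖2*Λ-1‖ * ‖_‖ ≤ 1 / ‖2*Λ-1‖ * |∫ t in (0:ℝ)..z, (2*L) * g t| := by
        refine mul_le_mul_of_nonneg_left key (by positivity)
    _ = (2 * L / ‖2 * Λ - 1‖) * ∫ t in (0:ℝ)..z, g t := by
        rw [hint, abs_of_nonneg (by positivity)]; ring

lemma neu_S_cont (hre : 0 < (2*Λ-1).re) (ha : 0 < a)
    (hfc : ContinuousOn (fun p : ℝ × ℂ => f p.1 p.2) (Set.Icc 0 a ×ˢ Set.univ))
    (hS : ∀ u z, S u z = (1 / (2 * Λ - 1)) *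
      ∫ t in (0 : ℝ)..z, (1 - (((t / z : ℝ)) : ℂ) ^ (2 * Λ - 1)) * f t (u t))
    {u : ℝ → ℂ} (hu : ContinuousOn u (Set.Icc 0 a)) :
    ContinuousOn (S u) (Set.Icc 0 a) := by
  set W := 2 * Λ - 1 with hW
  have hφ : ContinuousOn (fun t => f t (u t)) (Set.Icc 0 a) := neu_contOn_comp hfc hu
  obtain ⟨M, hM⟩ := isCompact_Icc.exists_bound_of_continuousOn hφ
  have hM0 : 0 ≤ M := le_trans (norm_nonneg _) (hM 0 ⟨le_refl _, ha.le⟩)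
  have hψ : ContinuousOn (fun t : ℝ => ((t : ℂ) ^ W) * f t (u t)) (Set.Icc 0 a) :=
    (Complex.continuous_ofReal_cpow_const hre).continuousOn.mul hφ
  have hA : ContinuousOn (fun x => ∫ t in (0:ℝ)..x, f t (u t)) (Set.Icc 0 a) := by
    have := intervalIntegral.continuousOn_primitive_interval
      (μ := volume) (a := (0:ℝ)) (b := a) (f := fun t => f t (u t)) ?_
    · rwa [Set.uIcc_of_le ha.le] at this
    · rw [Set.uIcc_of_le ha.le]; exact hφ.integrableOn_Icc
  have hB : ContinuousOn (fun x => ∫ t in (0:ℝ)..x, ((t : ℂ) ^ W) * f t (u t)) (Set.Icc 0 a) := by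
    have := intervalIntegral.continuousOn_primitive_interval
      (μ := volume) (a := (0:ℝ)) (b := a) (f := fun t : ℝ => ((t : ℂ) ^ W) * f t (u t)) ?_
    · rwa [Set.uIcc_of_le ha.le] at this
    · rw [Set.uIcc_of_le ha.le]; exact hψ.integrableOn_Icc
  -- explicit formula for z > 0
  have hφi : ∀ z ∈ Set.Icc 0 a, IntervalIntegrable (fun t => f t (u t)) volume 0 z := by
    intro z hz
    apply ContinuousOn.intervalIntegrable
    rw [Set.uIcc_of_le hz.1]
    exact hφ.mono (Set.Icc_subset_Icc_right hz.2)
  have hψi : ∀ z ∈ Set.Icc 0 a, IntervalIntegrable (fun t : ℝ => ((t:ℂ) ^ W) * f t (u t)) volume 0 z := by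
    intro z hz
    apply ContinuousOn.intervalIntegrable
    rw [Set.uIcc_of_le hz.1]
    exact hψ.mono (Set.Icc_subset_Icc_right hz.2)
  have hform : ∀ z ∈ Set.Icc 0 a, 0 < z → S u z = (1 / W) *
      ((∫ t in (0:ℝ)..z, f t (u t)) - ((z:ℂ) ^ (-W)) * ∫ t in (0:ℝ)..z, ((t:ℂ) ^ W) * f t (u t)) := by
    intro z hz hzpos
    rw [hS u z]
    congr 1
    rw [← intervalIntegral.integral_const_mul, ← intervalIntegral.integral_sub (hφi z hz)
      ((hψi z hz).const_mul _)]
    apply intervalIntegral.integral_congr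
    intro t ht
    rw [Set.uIcc_of_le hz.1] at ht
    have h1 : (((t / z : ℝ)) : ℂ) ^ W = ((z:ℂ) ^ (-W)) * ((t:ℂ) ^ W) := by
      have : (t / z : ℝ) = t * z⁻¹ := div_eq_mul_inv t z
      rw [this, Complex.ofReal_mul, Complex.mul_cpow_ofReal_nonneg ht.1 (inv_nonneg.mpr (le_of_lt hzpos))]
      rw [Complex.ofReal_inv, Complex.inv_cpow _ _ ?harg, ← Complex.cpow_neg]
      · ring
      · rw [Complex.arg_ofReal_of_nonneg hzpos.le]
        exact Real.pi_ne_zero.symm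
    simp only
    rw [h1]; ring
  intro z hz
  rcases eq_or_lt_of_le hz.1 with h0 | hzpos
  · -- z = 0
    subst h0
    have hSu0 : S u 0 = 0 := by rw [hS u 0, intervalIntegral.integral_same, mul_zero]
    rw [ContinuousWithinAt, hSu0]
    apply squeeze_zero_norm' (a := fun x => (‖1/W‖ * (2 * M)) * |x|)
    · filter_upwards [self_mem_nhdsWithin] with x hx
      have hx0 : (0:ℝ) ≤ x := hx.1
      have hb : ‖∫ t in (0:ℝ)..x, (1 - (((t / x : ℝ)) : ℂ) ^ W) * f t (u t)‖ ≤ (2*M) * |x - 0| := by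
        apply intervalIntegral.norm_integral_le_of_norm_le_const
        intro t ht
        rw [Set.uIoc_of_le hx0] at ht
        have hta : t ∈ Set.Icc 0 a := ⟨ht.1.le, le_trans ht.2 hx.2⟩
        rw [norm_mul]
        calc ‖1 - (((t / x : ℝ)) : ℂ) ^ W‖ * ‖f t (u t)‖ ≤ 2 * M := by
              refine mul_le_mul ?_ (hM t hta) (norm_nonneg _) (by norm_num)
              exact neu_ker_bound hre ht.1 ht.2
          _ = 2 * M := rfl
      rw [hS u x, norm_mul]
      calc ‖1/W‖ * ‖∫ t in (0:ℝ)..x, (1 - (((t / x : ℝ)) : ℂ) ^ W) * f t (u t)‖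
          ≤ ‖1/W‖ * ((2*M) * |x - 0|) :=
            mul_le_mul_of_nonneg_left hb (norm_nonneg _)
        _ = ‖1/W‖ * (2*M) * |x| := by rw [sub_zero]; ring
    · have : Tendsto (fun x : ℝ => (‖1/W‖ * (2 * M)) * |x|) (nhds 0) (nhds 0) := by
        have h' : Tendsto (fun x : ℝ => (‖1/W‖ * (2 * M)) * |x|) (nhds 0)
            (nhds ((‖1/W‖ * (2 * M)) * |0|)) :=
          (continuous_const.mul continuous_abs).tendsto 0
        simpa using h'
      exact this.mono_left nhdsWithin_le_nhds
  · -- z > 0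
    have hcont : ContinuousWithinAt (fun x => (1 / W) *
        ((∫ t in (0:ℝ)..x, f t (u t)) - ((x:ℂ) ^ (-W)) * ∫ t in (0:ℝ)..x, ((t:ℂ) ^ W) * f t (u t)))
        (Set.Icc 0 a) z := by
      refine continuousWithinAt_const.mul (((hA z hz).sub (ContinuousWithinAt.mul ?_ (hB z hz))))
      exact (Complex.continuousAt_ofReal_cpow_const z (-W) (Or.inr hzpos.ne')).continuousWithinAt
    apply hcont.congr_of_eventuallyEq
    · have hmem : Set.Ioi (0:ℝ) ∈ nhdsWithin z (Set.Icc 0 a) :=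
        mem_nhdsWithin_of_mem_nhds (Ioi_mem_nhds hzpos)
      filter_upwards [hmem, self_mem_nhdsWithin] with x hx hx'
      exact hform x hx' hx
    · exact hform z hz hzpos

lemma neu_arith (K C z : ℝ) (n : ℕ) :
    K * ((C * K ^ n / n.factorial) * (z ^ (n+1) / (n+1)))
      = C * (K ^ (n+1) * z ^ (n+1) / (n+1).factorial) := by
  rw [Nat.factorial_succ]
  have h1 : ((n.factorial : ℝ)) ≠ 0 := by positivity
  have h2 : ((n:ℝ) + 1) ≠ 0 := by positivity
  push_cast
  field_simp
  ring

-- iteration step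
lemma neu_iter (hre : 0 < (2*Λ-1).re) (hL : 0 ≤ L)
    (hfc : ContinuousOn (fun p : ℝ × ℂ => f p.1 p.2) (Set.Icc 0 a ×ˢ Set.univ))
    (hflip : ∀ z ∈ Set.Icc (0 : ℝ) a, ∀ u v : ℂ,
      ‖f z u - f z v‖ ≤ L * ‖u - v‖)
    (hS : ∀ u z, S u z = (1 / (2 * Λ - 1)) *
      ∫ t in (0 : ℝ)..z, (1 - (((t / z : ℝ)) : ℂ) ^ (2 * Λ - 1)) * f t (u t))
    {u v : ℝ → ℂ} (hu : ContinuousOn u (Set.Icc 0 a)) (hv : ContinuousOn v (Set.Icc 0 a))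
    {C : ℝ} {n : ℕ}
    (hbd : ∀ t ∈ Set.Icc 0 a, ‖u t - v t‖ ≤
      C * ((2 * L / ‖2 * Λ - 1‖) ^ n * t ^ n / n.factorial))
    {z : ℝ} (hz : z ∈ Set.Icc 0 a) :
    ‖S u z - S v z‖ ≤
      C * ((2 * L / ‖2 * Λ - 1‖) ^ (n+1) * z ^ (n+1) / (n+1).factorial) := by
  have hg : Continuous (fun t : ℝ =>
      C * ((2 * L / ‖2 * Λ - 1‖) ^ n * t ^ n / n.factorial)) := by
    continuity
  have h := neu_key hre hL hfc hflip hS hu hv hz hg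
    (fun t ht => hbd t ⟨ht.1, le_trans ht.2 hz.2⟩)
  refine le_trans h (le_of_eq ?_)
  generalize hK : 2 * L / ‖2 * Λ - 1‖ = K
  have : ∫ t in (0:ℝ)..z, C * (K ^ n * t ^ n / n.factorial)
      = (C * K ^ n / n.factorial) * (z ^ (n+1) / (n+1)) := by
    have : (fun t : ℝ => C * (K ^ n * t ^ n / n.factorial))
        = fun t : ℝ => (C * K ^ n / n.factorial) * t ^ n := by
      funext t; ring
    rw [this, intervalIntegral.integral_const_mul, integral_pow]
    ring
  rw [this]
  exact neu_arith K C z n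

end NEUaux

/-- Existence-uniqueness for the singular nonlinear IVP: with
`Re Λ > 1/2` and `f` continuous and `L`-Lipschitz in its second variable, the
integral equation `y z = y₀ + (1/(2Λ-1)) ∫₀^z [1-(t/z)^(2Λ-1)] f(t, y t) dt`
has a unique continuous solution on `[0,a]`, and the Picard iterates
`yⁿ⁺¹ = y₀ + S yⁿ`, `y⁰ ≡ y₀`, converge uniformly to it with
`|y z - yⁿ z| ≤ (2zL/|2Λ-1|)ⁿ/n! · ‖y - y₀‖_∞`. -/
theorem nonlinear_existence_uniqueness
    (Λ : ℂ) (hΛ : 1 / 2 < Λ.re) (a L : ℝ) (ha : 0 < a) (hL : 0 ≤ L)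
    (f : ℝ → ℂ → ℂ)
    (hfc : ContinuousOn (fun p : ℝ × ℂ => f p.1 p.2) (Set.Icc 0 a ×ˢ Set.univ))
    (hflip : ∀ z ∈ Set.Icc (0 : ℝ) a, ∀ u v : ℂ,
      ‖f z u - f z v‖ ≤ L * ‖u - v‖)
    (y₀ : ℂ)
    (S : (ℝ → ℂ) → (ℝ → ℂ))
    (hS : ∀ u z, S u z = (1 / (2 * Λ - 1)) *
      ∫ t in (0 : ℝ)..z, (1 - (((t / z : ℝ)) : ℂ) ^ (2 * Λ - 1)) * f t (u t))
    (Y : ℕ → ℝ → ℂ) (hY0 : Y 0 = fun _ => y₀)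
    (hYs : ∀ n, Y (n + 1) = fun z => y₀ + S (Y n) z) :
    ∃ y : ℝ → ℂ, ContinuousOn y (Set.Icc 0 a) ∧
      (∀ z ∈ Set.Icc (0 : ℝ) a, y z = y₀ + S y z) ∧
      (∀ y' : ℝ → ℂ, ContinuousOn y' (Set.Icc 0 a) →
        (∀ z ∈ Set.Icc (0 : ℝ) a, y' z = y₀ + S y' z) →
        Set.EqOn y' y (Set.Icc 0 a)) ∧
      TendstoUniformlyOn Y y Filter.atTop (Set.Icc 0 a) ∧
      (∀ n : ℕ, 1 ≤ n → ∀ z ∈ Set.Icc (0 : ℝ) a,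
        ‖y z - Y n z‖ ≤
          (2 * z * L / ‖2 * Λ - 1‖) ^ n / n.factorial *
            (⨆ t : Set.Icc (0 : ℝ) a, ‖y t - y₀‖)) := by
  have hre : 0 < (2*Λ-1).re := by
    have h : (2*Λ-1).re = 2*Λ.re - 1 := by
      simp [Complex.sub_re, Complex.mul_re]
    rw [h]; linarith
  obtain ⟨K, hKdef⟩ : ∃ K : ℝ, K = 2 * L / ‖2 * Λ - 1‖ := ⟨_, rfl⟩
  have hK0 : 0 ≤ K := by rw [hKdef]; positivity
  -- continuity of the iterates
  have contY : ∀ n, ContinuousOn (Y n) (Set.Icc 0 a) := by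
    intro n
    induction n with
    | zero => rw [hY0]; exact continuousOn_const
    | succ n ih =>
        rw [hYs n]
        exact continuousOn_const.add (neu_S_cont hre ha hfc hS ih)
  -- bound on first difference
  obtain ⟨C₁, hC₁⟩ := isCompact_Icc.exists_bound_of_continuousOn ((contY 1).sub (contY 0))
  have hC₁0 : 0 ≤ C₁ := le_trans (norm_nonneg _) (hC₁ 0 ⟨le_refl _, ha.le⟩)
  -- successive difference bounds
  have hD : ∀ n, ∀ z ∈ Set.Icc (0:ℝ) a,
      ‖Y (n+1) z - Y n z‖ ≤ C₁ * (K^n * z^n / n.factorial) := by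
    intro n
    induction n with
    | zero =>
        intro z hz
        simpa using hC₁ z hz
    | succ n ih =>
        intro z hz
        have e1 : Y (n+1+1) z = y₀ + S (Y (n+1)) z := by rw [hYs (n+1)]
        have e2 : Y (n+1) z = y₀ + S (Y n) z := by rw [hYs n]
        rw [e1, e2, add_sub_add_left_eq_sub, hKdef]
        refine neu_iter hre hL hfc hflip hS (contY (n+1)) (contY n) ?_ hz
        intro t ht
        rw [← hKdef]
        have h3 : Y (n+1) t = y₀ + S (Y n) t := by rw [hYs n]
        exact ih t ht
  -- the sequence in the space of continuous maps
  let F : ℕ → C(Set.Icc (0:ℝ) a, ℂ) := fun n =>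
    ⟨fun t => Y n t, continuousOn_iff_continuous_restrict.mp (contY n)⟩
  have hdistF : ∀ n, dist (F n) (F (n+1)) ≤ C₁ * ((K*a)^n / n.factorial) := by
    intro n
    rw [ContinuousMap.dist_le (by positivity)]
    intro x
    have h1 := hD n x x.2
    have h2 : dist (F n x) (F (n+1) x) = ‖Y (n+1) x - Y n x‖ := by
      rw [dist_comm, Complex.dist_eq]; rfl
    rw [h2]
    refine le_trans h1 ?_
    rw [mul_pow]
    have hx0 : (0:ℝ) ≤ (x:ℝ) := x.2.1
    gcongr
    exact x.2.2
  have hsum : Summable (fun n => C₁ * ((K*a)^n / n.factorial)) :=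
    (Real.summable_pow_div_factorial (K*a)).mul_left C₁
  have hcauchy : CauchySeq F := cauchySeq_of_dist_le_of_summable _ hdistF hsum
  obtain ⟨g, hg⟩ := cauchySeq_tendsto_of_complete hcauchy
  set y : ℝ → ℂ := fun z => if h : z ∈ Set.Icc (0:ℝ) a then g ⟨z, h⟩ else y₀ with hydef
  have hyres : ∀ t (ht : t ∈ Set.Icc (0:ℝ) a), y t = g ⟨t, ht⟩ := fun t ht => dif_pos ht
  have ycont : ContinuousOn y (Set.Icc 0 a) := by
    rw [continuousOn_iff_continuous_restrict]
    have h1 : Set.domRestrict (Set.Icc (0:ℝ) a) y = ⇑g := by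
      funext x
      rw [Set.domRestrict_apply, hyres x x.2]
    rw [h1]; exact g.continuous
  have hδ : Tendsto (fun n => dist (F n) g) atTop (nhds 0) :=
    tendsto_iff_dist_tendsto_zero.mp hg
  have hdistpt : ∀ n t, ∀ ht : t ∈ Set.Icc (0:ℝ) a,
      ‖Y n t - y t‖ ≤ dist (F n) g := by
    intro n t ht
    rw [hyres t ht]
    have h1 : ‖Y n t - g ⟨t, ht⟩‖ = dist (F n ⟨t, ht⟩) (g ⟨t, ht⟩) := by
      rw [Complex.dist_eq]; rfl
    rw [h1]
    exact ContinuousMap.dist_apply_le_dist _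
  have huc : TendstoUniformlyOn Y y Filter.atTop (Set.Icc 0 a) := by
    rw [Metric.tendstoUniformlyOn_iff]
    intro ε hε
    filter_upwards [hδ.eventually (gt_mem_nhds hε)] with n hn x hx
    have := hdistpt n x hx
    rw [dist_comm, Complex.dist_eq]
    exact lt_of_le_of_lt this hn
  have hptwise : ∀ z, ∀ hz : z ∈ Set.Icc (0:ℝ) a,
      Tendsto (fun n => Y n z) atTop (nhds (y z)) := by
    intro z hz
    rw [tendsto_iff_dist_tendsto_zero]
    refine squeeze_zero (fun n => dist_nonneg) (fun n => ?_) hδ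
    rw [Complex.dist_eq]
    exact hdistpt n z hz
  have hfix : ∀ z ∈ Set.Icc (0:ℝ) a, y z = y₀ + S y z := by
    intro z hz
    have h1 : Tendsto (fun n => Y (n+1) z) atTop (nhds (y z)) :=
      (hptwise z hz).comp (tendsto_add_atTop_nat 1)
    have h2 : Tendsto (fun n => S (Y n) z) atTop (nhds (S y z)) := by
      rw [tendsto_iff_dist_tendsto_zero]
      refine squeeze_zero (fun n => dist_nonneg)
        (g := fun n => (K * z) * dist (F n) g) (fun n => ?_) ?_
      · have hb := neu_key hre hL hfc hflip hS (contY n) ycont hz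
          (g := fun _ => dist (F n) g) continuous_const
          (fun t ht => hdistpt n t ⟨ht.1, le_trans ht.2 hz.2⟩)
        rw [intervalIntegral.integral_const, smul_eq_mul, sub_zero] at hb
        rw [Complex.dist_eq]
        refine le_trans hb (le_of_eq ?_)
        rw [← hKdef]; ring
      · have := hδ.const_mul (K * z)
        simpa using this
    have h3 : Tendsto (fun n => Y (n+1) z) atTop (nhds (y₀ + S y z)) := by
      have he : (fun n => Y (n+1) z) = fun n => y₀ + S (Y n) z :=
        funext fun n => by rw [hYs n]
      rw [he]
      exact tendsto_const_nhds.add h2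
    exact tendsto_nhds_unique h1 h3
  -- sup bound C₀
  have hyabs : Continuous (fun t : Set.Icc (0:ℝ) a => ‖y ↑t - y₀‖) := by
    have h1 : (fun t : Set.Icc (0:ℝ) a => ‖y ↑t - y₀‖)
        = fun t => ‖g t - y₀‖ := by
      funext t
      rw [hyres _ t.2]
    rw [h1]
    exact continuous_norm.comp ((map_continuous g).sub continuous_const)
  have hbdd : BddAbove (Set.range (fun t : Set.Icc (0:ℝ) a => ‖y ↑t - y₀‖)) :=
    (isCompact_range hyabs).bddAbove
  have hC₀ : ∀ z, ∀ hz : z ∈ Set.Icc (0:ℝ) a,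
      ‖y z - y₀‖ ≤ ⨆ t : Set.Icc (0:ℝ) a, ‖y ↑t - y₀‖ :=
    fun z hz => le_ciSup hbdd ⟨z, hz⟩
  -- error bound
  have herr : ∀ n, ∀ z ∈ Set.Icc (0:ℝ) a, ‖y z - Y n z‖ ≤
      (⨆ t : Set.Icc (0:ℝ) a, ‖y ↑t - y₀‖) * (K^n * z^n / n.factorial) := by
    intro n
    induction n with
    | zero =>
        intro z hz
        simpa [hY0] using hC₀ z hz
    | succ n ih =>
        intro z hz
        have e2 : Y (n+1) z = y₀ + S (Y n) z := by rw [hYs n]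
        rw [hfix z hz, e2, add_sub_add_left_eq_sub, hKdef]
        refine neu_iter hre hL hfc hflip hS ycont (contY n) ?_ hz
        intro t ht
        rw [← hKdef]
        exact ih t ht
  -- uniqueness
  have huniq : ∀ y' : ℝ → ℂ, ContinuousOn y' (Set.Icc 0 a) →
      (∀ z ∈ Set.Icc (0:ℝ) a, y' z = y₀ + S y' z) → Set.EqOn y' y (Set.Icc 0 a) := by
    intro y' hy'c hy'fix
    obtain ⟨C', hC'⟩ := isCompact_Icc.exists_bound_of_continuousOn (hy'c.sub ycont)
    have hC'0 : 0 ≤ C' := le_trans (norm_nonneg _) (hC' 0 ⟨le_refl _, ha.le⟩)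
    have hiter : ∀ n, ∀ z ∈ Set.Icc (0:ℝ) a,
        ‖y' z - y z‖ ≤ C' * (K^n * z^n / n.factorial) := by
      intro n
      induction n with
      | zero =>
          intro z hz
          simpa using hC' z hz
      | succ n ih =>
          intro z hz
          rw [hy'fix z hz, hfix z hz, add_sub_add_left_eq_sub, hKdef]
          refine neu_iter hre hL hfc hflip hS hy'c ycont ?_ hz
          intro t ht
          rw [← hKdef]
          exact ih t ht
    intro z hz
    have hlim : Tendsto (fun n : ℕ => C' * ((K*a)^n / n.factorial)) atTop (nhds 0) := by
      have := (Real.summable_pow_div_factorial (K*a)).tendsto_atTop_zero.const_mul C'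
      simpa using this
    have hle : ∀ n : ℕ, ‖y' z - y z‖ ≤ C' * ((K*a)^n / n.factorial) := by
      intro n
      refine le_trans (hiter n z hz) ?_
      rw [mul_pow]
      gcongr
      · exact hz.1
      · exact hz.2
    have h0 : ‖y' z - y z‖ ≤ 0 :=
      le_of_tendsto_of_tendsto' tendsto_const_nhds hlim hle
    have h1 : ‖y' z - y z‖ = 0 := le_antisymm h0 (norm_nonneg _)
    exact sub_eq_zero.mp (norm_eq_zero.mp h1)
  refine ⟨y, ycont, hfix, huniq, huc, ?_⟩
  intro n _ z hz
  refine le_trans (herr n z hz) (le_of_eq ?_)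
  have h1 : 2 * z * L / ‖2 * Λ - 1‖ = K * z := by rw [hKdef]; ring
  rw [h1, mul_pow]
  ring
end

section
/- Uniform O(Λ^{-n}) bound for Olver's remainder: let Re(Λ) > 1/2, g continuous and integrable on [0,a] with ‖g‖₁ = ∫₀^a |g|, and let R satisfy the Volterra equation R(z) = (1/(2Λ-1)) ∫₀^z [1-(t/z)^{2Λ-1}] [ A'(t)/(2Λ)^{n-1} + g(t) R(t) ] dt where A' is continuous with ‖A'‖₁ = ∫₀^a|A'|. Then |R(z)| ≤ (2‖A'‖₁ / (|2Λ-1| |2Λ|^{n-1})) · exp( 2‖g‖₁/|2Λ-1| ) for all z ∈ [0,a]. -/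
open MeasureTheory intervalIntegral Set

/-- Integral form of Gronwall's inequality with variable coefficient. -/
lemma gronwall_integral_aux {a K L : ℝ} (ha : 0 < a) (hK : 0 ≤ K) (hL : 0 ≤ L)
    {φ β : ℝ → ℝ} (hφ : Continuous φ) (hβ : Continuous β)
    (hβ0 : ∀ z, 0 ≤ β z)
    (hineq : ∀ z ∈ Set.Icc (0:ℝ) a, φ z ≤ K + L * ∫ t in (0:ℝ)..z, β t * φ t) :
    ∀ z ∈ Set.Icc (0:ℝ) a, φ z ≤ K * Real.exp (L * ∫ t in (0:ℝ)..a, β t) := by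
  set F : ℝ → ℝ := fun z => ∫ t in (0:ℝ)..z, β t * φ t with hF
  set G : ℝ → ℝ := fun z => ∫ t in (0:ℝ)..z, β t with hG
  have hβφ : Continuous (fun t => β t * φ t) := hβ.mul hφ
  have hFd : ∀ z, HasDerivAt F (β z * φ z) z := fun z =>
    intervalIntegral.integral_hasDerivAt_right (hβφ.intervalIntegrable _ _)
      hβφ.stronglyMeasurable.stronglyMeasurableAtFilter hβφ.continuousAt
  have hGd : ∀ z, HasDerivAt G (β z) z := fun z =>
    intervalIntegral.integral_hasDerivAt_right (hβ.intervalIntegrable _ _)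
      hβ.stronglyMeasurable.stronglyMeasurableAtFilter hβ.continuousAt
  set H : ℝ → ℝ := fun z => (K + L * F z) * Real.exp (-(L * G z)) with hH
  have hHd : ∀ z, HasDerivAt H
      (L * (β z * φ z) * Real.exp (-(L * G z)) +
        (K + L * F z) * (Real.exp (-(L * G z)) * (-(L * β z)))) z := by
    intro z
    have h1 : HasDerivAt (fun z => K + L * F z) (L * (β z * φ z)) z :=
      ((hFd z).const_mul L).const_add K
    have h2 : HasDerivAt (fun z => -(L * G z)) (-(L * β z)) z :=
      (((hGd z).const_mul L)).neg
    exact h1.mul h2.exp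
  have hHanti : AntitoneOn H (Set.Icc 0 a) := by
    apply antitoneOn_of_deriv_nonpos (convex_Icc 0 a)
    · exact fun z _ => (hHd z).continuousAt.continuousWithinAt
    · exact fun z _ => ((hHd z).differentiableAt).differentiableWithinAt
    · intro z hz
      rw [interior_Icc] at hz
      rw [(hHd z).deriv]
      have hzI : z ∈ Set.Icc (0:ℝ) a := ⟨hz.1.le, hz.2.le⟩
      have hφle : φ z ≤ K + L * F z := hineq z hzI
      have hexp : (0:ℝ) < Real.exp (-(L * G z)) := Real.exp_pos _
      have : L * (β z * φ z) * Real.exp (-(L * G z)) +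
          (K + L * F z) * (Real.exp (-(L * G z)) * (-(L * β z)))
          = (L * β z * Real.exp (-(L * G z))) * (φ z - (K + L * F z)) := by ring
      rw [this]
      apply mul_nonpos_of_nonneg_of_nonpos
      · exact mul_nonneg (mul_nonneg hL (hβ0 z)) (Real.exp_nonneg _)
      · linarith
  intro z hz
  have hH0 : H 0 = K := by
    simp [hH, hF, hG, intervalIntegral.integral_same]
  have hHz : H z ≤ K := by
    rw [← hH0]
    exact hHanti (Set.left_mem_Icc.mpr ha.le) hz hz.1
  have key : K + L * F z ≤ K * Real.exp (L * G z) := by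
    have := mul_le_mul_of_nonneg_right hHz (Real.exp_nonneg (L * G z))
    rw [hH] at this
    simp only at this
    rwa [mul_assoc, ← Real.exp_add, neg_add_cancel, Real.exp_zero, mul_one] at this
  have hGmono : G z ≤ G a := by
    have hadd : G z + ∫ t in z..a, β t = G a :=
      intervalIntegral.integral_add_adjacent_intervals
        (hβ.intervalIntegrable _ _) (hβ.intervalIntegrable _ _)
    have hnn : 0 ≤ ∫ t in z..a, β t :=
      intervalIntegral.integral_nonneg hz.2 (fun t _ => hβ0 t)
    linarith
  calc φ z ≤ K + L * F z := hineq z hz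
    _ ≤ K * Real.exp (L * G z) := key
    _ ≤ K * Real.exp (L * G a) := by
        apply mul_le_mul_of_nonneg_left _ hK
        exact Real.exp_le_exp.mpr (mul_le_mul_of_nonneg_left hGmono hL)

/-- Uniform `O(Λ⁻ⁿ)` bound for Olver's remainder: if `Re Λ > 1/2`,
`g` and `A'` are continuous on `[0,a]` with `‖g‖₁ = ∫₀^a |g|`, `‖A'‖₁ = ∫₀^a |A'|`,
and `R` satisfies the Volterra equation
`R z = (1/(2Λ-1)) ∫₀^z [1-(t/z)^(2Λ-1)] (A' t/(2Λ)^(n-1) + g t · R t) dt`, then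
`|R z| ≤ (2‖A'‖₁/(|2Λ-1| |2Λ|^(n-1))) exp(2‖g‖₁/|2Λ-1|)` on `[0,a]`. -/
theorem olver_remainder_uniform_bound
    (Λ : ℂ) (hΛ : 1 / 2 < Λ.re) (a : ℝ) (ha : 0 < a) (n : ℕ) (hn : 1 ≤ n)
    (g A' R : ℝ → ℂ)
    (hg : ContinuousOn g (Set.Icc 0 a)) (hA' : ContinuousOn A' (Set.Icc 0 a))
    (hR : ContinuousOn R (Set.Icc 0 a))
    (heq : ∀ z ∈ Set.Icc (0 : ℝ) a,
      R z = (1 / (2 * Λ - 1)) *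
        ∫ t in (0 : ℝ)..z, (1 - (((t / z : ℝ)) : ℂ) ^ (2 * Λ - 1)) *
          (A' t / (2 * Λ) ^ (n - 1) + g t * R t)) :
    ∀ z ∈ Set.Icc (0 : ℝ) a,
      ‖R z‖ ≤
        2 * (∫ t in (0 : ℝ)..a, ‖A' t‖) /
            (‖2 * Λ - 1‖ * (‖2 * Λ‖) ^ (n - 1)) *
          Real.exp (2 * (∫ t in (0 : ℝ)..a, ‖g t‖) /
            ‖2 * Λ - 1‖) := by
  -- basic facts about the constants
  have hre : 0 < (2 * Λ - 1).re := by
    simp [Complex.sub_re, Complex.mul_re]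
    linarith
  have hne : (2 * Λ - 1) ≠ 0 := fun h => by simp [h] at hre
  have hC : 0 < ‖2 * Λ - 1‖ := by
    exact norm_pos_iff.mpr hne
  have h2Λne : (2 * Λ) ≠ 0 := by
    intro h
    have : (2 * Λ).re = 0 := by simp [h]
    simp [Complex.mul_re] at this
    simp [this] at hΛ
    linarith
  have hM : 0 < (‖2 * Λ‖) ^ (n - 1) :=
    pow_pos (norm_pos_iff.mpr h2Λne) _
  set C := ‖2 * Λ - 1‖ with hCdef
  set M := (‖2 * Λ‖) ^ (n - 1) with hMdef
  -- clamping to [0, a]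
  set p : ℝ → ℝ := fun t => min (max t 0) a with hp
  have hpc : Continuous p := (continuous_id.max continuous_const).min continuous_const
  have hpm : ∀ t, p t ∈ Set.Icc (0:ℝ) a := fun t =>
    ⟨le_min (le_max_right t 0) ha.le, min_le_right _ _⟩
  have hpid : ∀ t ∈ Set.Icc (0:ℝ) a, p t = t := fun t ht => by
    simp [hp, max_eq_left ht.1, min_eq_left ht.2]
  set φ : ℝ → ℝ := fun t => ‖R (p t)‖ with hφdef
  set β : ℝ → ℝ := fun t => ‖g (p t)‖ with hβdef
  have hφc : Continuous φ := continuous_norm.comp (hR.comp_continuous hpc hpm)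
  have hβc : Continuous β := continuous_norm.comp (hg.comp_continuous hpc hpm)
  have hβ0 : ∀ t, 0 ≤ β t := fun t => norm_nonneg _
  -- the constants
  set IA := ∫ t in (0:ℝ)..a, ‖A' t‖ with hIA
  set Ig := ∫ t in (0:ℝ)..a, ‖g t‖ with hIg
  have hIAnn : 0 ≤ IA :=
    intervalIntegral.integral_nonneg ha.le (fun t _ => norm_nonneg _)
  set K := 2 * IA / (C * M) with hK
  set L := 2 / C with hL
  have hKnn : 0 ≤ K := by positivity
  have hLnn : 0 ≤ L := by positivity
  -- the key Volterra estimate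
  have hineq : ∀ z ∈ Set.Icc (0:ℝ) a, φ z ≤ K + L * ∫ t in (0:ℝ)..z, β t * φ t := by
    intro z hz
    have hφz : φ z = ‖R z‖ := by rw [hφdef]; simp [hpid z hz]
    -- rewrite ∫ β * φ as ∫ |g| * |R|
    have hcongr : (∫ t in (0:ℝ)..z, β t * φ t)
        = ∫ t in (0:ℝ)..z, ‖g t‖ * ‖R t‖ := by
      apply intervalIntegral.integral_congr
      intro t ht
      rw [Set.uIcc_of_le hz.1] at ht
      have htI : t ∈ Set.Icc (0:ℝ) a := ⟨ht.1, ht.2.trans hz.2⟩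
      simp [hβdef, hφdef, hpid t htI]
    rw [hφz, hcongr]
    rcases eq_or_lt_of_le hz.1 with hz0 | hz0
    · -- z = 0
      rw [← hz0]
      have : R 0 = 0 := by
        rw [heq 0 (Set.left_mem_Icc.mpr ha.le)]
        simp
      rw [this]
      simp only [norm_zero, intervalIntegral.integral_same, mul_zero, add_zero]
      exact hKnn
    · -- z > 0
      have hIccz : Set.Icc (0:ℝ) z ⊆ Set.Icc 0 a := Set.Icc_subset_Icc le_rfl hz.2
      -- continuity of the kernel
      have hker : Continuous (fun t : ℝ => 1 - (((t / z : ℝ)) : ℂ) ^ (2 * Λ - 1)) := by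
        apply continuous_const.sub
        apply continuous_iff_continuousAt.mpr
        intro t
        have := Complex.continuousAt_ofReal_cpow (t / z) (2 * Λ - 1) (Or.inl hre)
        have hpair : ContinuousAt (fun s : ℝ => ((s / z, 2 * Λ - 1) : ℝ × ℂ)) t :=
          ((continuous_id.div_const z).prodMk continuous_const).continuousAt
        show ContinuousAt ((fun p : ℝ × ℂ => (p.1 : ℂ) ^ p.2) ∘
          (fun s : ℝ => ((s / z, 2 * Λ - 1) : ℝ × ℂ))) t
        exact ContinuousAt.comp this hpair
      -- continuity of the rest
      have hmain : ContinuousOn (fun t => A' t / (2 * Λ) ^ (n - 1) + g t * R t)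
          (Set.Icc 0 z) :=
        (((hA'.mono hIccz).div_const _).add ((hg.mono hIccz).mul (hR.mono hIccz)))
      have hf : ContinuousOn (fun t : ℝ =>
          (1 - (((t / z : ℝ)) : ℂ) ^ (2 * Λ - 1)) *
            (A' t / (2 * Λ) ^ (n - 1) + g t * R t)) (Set.Icc 0 z) :=
        hker.continuousOn.mul hmain
      have hfint : IntervalIntegrable (fun t : ℝ =>
          (1 - (((t / z : ℝ)) : ℂ) ^ (2 * Λ - 1)) *
            (A' t / (2 * Λ) ^ (n - 1) + g t * R t)) volume 0 z := by
        apply ContinuousOn.intervalIntegrable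
        rwa [Set.uIcc_of_le hz.1]
      -- bound function
      have hbc : ContinuousOn (fun t =>
          2 * (‖A' t‖ / M + ‖g t‖ * ‖R t‖))
          (Set.Icc 0 z) := by
        exact continuousOn_const.mul
          (((continuous_norm.comp_continuousOn (hA'.mono hIccz)).div_const _).add
            ((continuous_norm.comp_continuousOn (hg.mono hIccz)).mul
              (continuous_norm.comp_continuousOn (hR.mono hIccz))))
      have hbint : IntervalIntegrable (fun t =>
          2 * (‖A' t‖ / M + ‖g t‖ * ‖R t‖))
          volume 0 z := by
        apply ContinuousOn.intervalIntegrable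
        rwa [Set.uIcc_of_le hz.1]
      -- pointwise bound
      have hpt : ∀ t ∈ Set.Icc (0:ℝ) z,
          ‖(1 - (((t / z : ℝ)) : ℂ) ^ (2 * Λ - 1)) *
            (A' t / (2 * Λ) ^ (n - 1) + g t * R t)‖
          ≤ 2 * (‖A' t‖ / M + ‖g t‖ * ‖R t‖) := by
        intro t ht
        rw [norm_mul]
        have hkb : ‖1 - (((t / z : ℝ)) : ℂ) ^ (2 * Λ - 1)‖ ≤ 2 := by
          have h1 : ‖(((t / z : ℝ)) : ℂ) ^ (2 * Λ - 1)‖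
              = (t / z) ^ (2 * Λ - 1).re :=
            Complex.norm_cpow_eq_rpow_re_of_nonneg (div_nonneg ht.1 hz0.le) hre.ne'
          have h2 : (t / z) ^ (2 * Λ - 1).re ≤ 1 :=
            Real.rpow_le_one (div_nonneg ht.1 hz0.le)
              ((div_le_one hz0).mpr ht.2) hre.le
          calc ‖1 - (((t / z : ℝ)) : ℂ) ^ (2 * Λ - 1)‖
              ≤ ‖(1:ℂ)‖ + ‖(((t / z : ℝ)) : ℂ) ^ (2 * Λ - 1)‖ := by
                simpa [sub_eq_add_neg] using norm_add_le (1:ℂ)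
                  (-((((t / z : ℝ)) : ℂ) ^ (2 * Λ - 1)))
            _ ≤ 1 + 1 := by rw [norm_one, h1]; linarith
            _ = 2 := by norm_num
        have hmb : ‖A' t / (2 * Λ) ^ (n - 1) + g t * R t‖
            ≤ ‖A' t‖ / M + ‖g t‖ * ‖R t‖ := by
          calc ‖A' t / (2 * Λ) ^ (n - 1) + g t * R t‖
              ≤ ‖A' t / (2 * Λ) ^ (n - 1)‖ + ‖g t * R t‖ :=
                norm_add_le _ _
            _ = ‖A' t‖ / M + ‖g t‖ * ‖R t‖ := by
                rw [norm_div, norm_mul, norm_pow, hMdef]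
        exact mul_le_mul hkb hmb (norm_nonneg _) (by norm_num)
      -- assemble
      rw [heq z hz, norm_mul]
      have hnorm : ‖∫ t in (0:ℝ)..z,
          (1 - (((t / z : ℝ)) : ℂ) ^ (2 * Λ - 1)) *
            (A' t / (2 * Λ) ^ (n - 1) + g t * R t)‖
          ≤ ∫ t in (0:ℝ)..z,
            2 * (‖A' t‖ / M + ‖g t‖ * ‖R t‖) := by
        refine le_trans ?_ (intervalIntegral.integral_mono_on hz.1 hfint.norm hbint hpt)
        exact intervalIntegral.norm_integral_le_integral_norm hz.1
      have habs1 : ‖1 / (2 * Λ - 1)‖ = 1 / C := by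
        rw [norm_div, norm_one, hCdef]
      rw [habs1]
      have hsplit : (∫ t in (0:ℝ)..z,
          2 * (‖A' t‖ / M + ‖g t‖ * ‖R t‖))
          = (2 / M) * (∫ t in (0:ℝ)..z, ‖A' t‖)
            + 2 * ∫ t in (0:ℝ)..z, ‖g t‖ * ‖R t‖ := by
        have hiA : IntervalIntegrable (fun t => ‖A' t‖) volume 0 z := by
          apply ContinuousOn.intervalIntegrable
          rw [Set.uIcc_of_le hz.1]
          exact continuous_norm.comp_continuousOn (hA'.mono hIccz)
        have higr : IntervalIntegrable
            (fun t => ‖g t‖ * ‖R t‖) volume 0 z := by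
          apply ContinuousOn.intervalIntegrable
          rw [Set.uIcc_of_le hz.1]
          exact (continuous_norm.comp_continuousOn (hg.mono hIccz)).mul
            (continuous_norm.comp_continuousOn (hR.mono hIccz))
        have hfun : (fun t => 2 * (‖A' t‖ / M
              + ‖g t‖ * ‖R t‖))
            = (fun t => (2 / M) * ‖A' t‖
              + 2 * (‖g t‖ * ‖R t‖)) := by
          funext t
          field_simp
        rw [hfun, intervalIntegral.integral_add (hiA.const_mul _) (higr.const_mul _),
          intervalIntegral.integral_const_mul, intervalIntegral.integral_const_mul]
      have hAle : (∫ t in (0:ℝ)..z, ‖A' t‖) ≤ IA := by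
        have h1 : IntervalIntegrable (fun t => ‖A' t‖) volume 0 z := by
          apply ContinuousOn.intervalIntegrable
          rw [Set.uIcc_of_le hz.1]
          exact continuous_norm.comp_continuousOn (hA'.mono hIccz)
        have h2 : IntervalIntegrable (fun t => ‖A' t‖) volume z a := by
          apply ContinuousOn.intervalIntegrable
          rw [Set.uIcc_of_le hz.2]
          exact continuous_norm.comp_continuousOn
            (hA'.mono (Set.Icc_subset_Icc hz.1 le_rfl))
        have hadd := intervalIntegral.integral_add_adjacent_intervals h1 h2
        have hnn : 0 ≤ ∫ t in z..a, ‖A' t‖ :=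
          intervalIntegral.integral_nonneg hz.2 (fun t _ => norm_nonneg _)
        rw [hIA, ← hadd]
        linarith
      have hRnn : 0 ≤ ∫ t in (0:ℝ)..z, ‖g t‖ * ‖R t‖ :=
        intervalIntegral.integral_nonneg hz.1
          (fun t _ => mul_nonneg (norm_nonneg _) (norm_nonneg _))
      calc (1 / C) * ‖∫ t in (0:ℝ)..z,
            (1 - (((t / z : ℝ)) : ℂ) ^ (2 * Λ - 1)) *
              (A' t / (2 * Λ) ^ (n - 1) + g t * R t)‖
          ≤ (1 / C) * ((2 / M) * (∫ t in (0:ℝ)..z, ‖A' t‖)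
            + 2 * ∫ t in (0:ℝ)..z, ‖g t‖ * ‖R t‖) := by
            apply mul_le_mul_of_nonneg_left _ (by positivity)
            rw [← hsplit]; exact hnorm
        _ ≤ (1 / C) * ((2 / M) * IA
            + 2 * ∫ t in (0:ℝ)..z, ‖g t‖ * ‖R t‖) := by
            apply mul_le_mul_of_nonneg_left _ (by positivity)
            have : (0:ℝ) < M := hM
            gcongr
        _ = K + L * ∫ t in (0:ℝ)..z, ‖g t‖ * ‖R t‖ := by
            rw [hK, hL]; field_simp
  -- apply Gronwall
  have hgron := gronwall_integral_aux ha hKnn hLnn hφc hβc hβ0 hineq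
  intro z hz
  have hβcongr : (∫ t in (0:ℝ)..a, β t) = Ig := by
    rw [hIg]
    apply intervalIntegral.integral_congr
    intro t ht
    rw [Set.uIcc_of_le ha.le] at ht
    simp [hβdef, hpid t ht]
  have := hgron z hz
  rw [hβcongr] at this
  have hφz : φ z = ‖R z‖ := by rw [hφdef]; simp [hpid z hz]
  rw [hφz] at this
  have hKeq : 2 * IA / (C * M) = K := by rw [hK]
  have hLeq : Real.exp (2 * Ig / C) = Real.exp (L * Ig) := by
    rw [hL]; congr 1; ring
  calc ‖R z‖ ≤ K * Real.exp (L * Ig) := this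
    _ = 2 * IA / (C * M) * Real.exp (2 * Ig / C) := by rw [hKeq, hLeq]
end

section
/- Second Frobenius solution: let Λ ∈ ℂ with Re(Λ) > 1/2 and 2 - 2Λ not a nonpositive integer. Define d₀ = 1 and d_{k+1} = d_k/((k+1)(k+2-2Λ)), and u(z) = z^{1-2Λ} Σ_{k=0}^∞ d_k z^k for z > 0 (principal power). Then u satisfies z u''(z) + 2Λ u'(z) = u(z) for all z > 0. -/
open Filter Real

/-- Coefficients whose series has infinite radius of convergence. -/
private def GoodCoeff (e : ℕ → ℂ) : Prop :=
  ∀ r : ℝ, 0 < r → Summable (fun k => ‖e k‖ * r ^ k)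

private lemma goodCoeff_mul {e : ℕ → ℂ} (hG : GoodCoeff e) (w : ℂ) :
    GoodCoeff (fun k => (w + (k : ℂ)) * e k) := by
  intro r hr
  have h2 : Summable (fun k => ‖w‖ * (‖e k‖ * r ^ k) + (2 * r) ^ k * ‖e k‖) :=
    ((hG r hr).mul_left _).add (((hG (2 * r) (by linarith)).mul_left 1).congr (by
      intro k; ring))
  refine Summable.of_nonneg_of_le (fun k => by positivity) (fun k => ?_) h2
  have h3 : ‖(w + (k : ℂ)) * e k‖ ≤ (‖w‖ + k) * ‖e k‖ := by
    rw [norm_mul]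
    gcongr
    calc ‖w + (k : ℂ)‖ ≤ ‖w‖ + ‖(k : ℂ)‖ := norm_add_le _ _
      _ = ‖w‖ + k := by rw [Complex.norm_natCast]
  have hk2 : (k : ℝ) ≤ 2 ^ k := by
    calc (k : ℝ) ≤ ((2 ^ k : ℕ) : ℝ) := by exact_mod_cast (Nat.lt_two_pow_self (n := k)).le
      _ = 2 ^ k := by push_cast; ring
  calc ‖(w + (k : ℂ)) * e k‖ * r ^ k ≤ (‖w‖ + k) * ‖e k‖ * r ^ k := by
        gcongr
    _ = ‖w‖ * (‖e k‖ * r ^ k) + ((k : ℝ) * r ^ k) * ‖e k‖ := by ring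
    _ ≤ ‖w‖ * (‖e k‖ * r ^ k) + (2 * r) ^ k * ‖e k‖ := by
        gcongr
        calc (k : ℝ) * r ^ k ≤ 2 ^ k * r ^ k := by gcongr
          _ = (2 * r) ^ k := by rw [mul_pow]

private lemma goodCoeff_d (Λ : ℂ) (d : ℕ → ℂ)
    (hd : ∀ k : ℕ, d (k + 1) = d k / (((k : ℂ) + 1) * ((k : ℂ) + 2 - 2 * Λ))) :
    GoodCoeff d := by
  intro r hr
  apply summable_of_ratio_norm_eventually_le (r := 1 / 2) (by norm_num)
  have h1 : ∀ᶠ k : ℕ in atTop, 2 * ‖Λ‖ + 1 ≤ (k : ℝ) + 2 :=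
    (tendsto_natCast_atTop_atTop.eventually_ge_atTop (2 * ‖Λ‖ + 1)).mono
      (fun k hk => by linarith)
  have h2 : ∀ᶠ k : ℕ in atTop, 2 * r ≤ (k : ℝ) + 1 :=
    (tendsto_natCast_atTop_atTop.eventually_ge_atTop (2 * r)).mono
      (fun k hk => by linarith)
  filter_upwards [h1, h2] with k hk1 hk2
  have e1 : ‖(k : ℂ) + 1‖ = (k : ℝ) + 1 := by
    rw [show ((k : ℂ) + 1) = (((k : ℝ) + 1 : ℝ) : ℂ) by push_cast; ring,
      Complex.norm_real, Real.norm_of_nonneg (by positivity)]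
  have e2 : (k : ℝ) + 2 - 2 * ‖Λ‖ ≤ ‖(k : ℂ) + 2 - 2 * Λ‖ := by
    have := norm_sub_norm_le ((k : ℂ) + 2) (2 * Λ)
    have e3 : ‖(k : ℂ) + 2‖ = (k : ℝ) + 2 := by
      rw [show ((k : ℂ) + 2) = (((k : ℝ) + 2 : ℝ) : ℂ) by push_cast; ring,
        Complex.norm_real, Real.norm_of_nonneg (by positivity)]
    have e4 : ‖(2 : ℂ) * Λ‖ = 2 * ‖Λ‖ := by
      rw [norm_mul]; norm_num
    rw [e3, e4] at this
    linarith
  have hN1 : (1 : ℝ) ≤ ‖(k : ℂ) + 2 - 2 * Λ‖ := by linarith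
  have hdk : ‖d (k + 1)‖ = ‖d k‖ / (((k : ℝ) + 1) * ‖(k : ℂ) + 2 - 2 * Λ‖) := by
    rw [hd k, norm_div, norm_mul, e1]
  rw [Real.norm_of_nonneg (by positivity), Real.norm_of_nonneg (by positivity), hdk]
  have key : r / (((k : ℝ) + 1) * ‖(k : ℂ) + 2 - 2 * Λ‖) ≤ 1 / 2 := by
    have hpos : (0 : ℝ) < ((k : ℝ) + 1) * ‖(k : ℂ) + 2 - 2 * Λ‖ := by positivity
    have hle : 2 * r * 1 ≤ ((k : ℝ) + 1) * ‖(k : ℂ) + 2 - 2 * Λ‖ := by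
      apply mul_le_mul (by linarith) hN1 (by norm_num) (by positivity)
    calc r / (((k : ℝ) + 1) * ‖(k : ℂ) + 2 - 2 * Λ‖) ≤ r / (2 * r * 1) :=
          div_le_div_of_nonneg_left hr.le (by positivity) hle
      _ = 1 / 2 := by field_simp
  calc ‖d k‖ / (((k : ℝ) + 1) * ‖(k : ℂ) + 2 - 2 * Λ‖) * r ^ (k + 1)
      = (‖d k‖ * r ^ k) * (r / (((k : ℝ) + 1) * ‖(k : ℂ) + 2 - 2 * Λ‖)) := by
        rw [pow_succ]; ring
    _ ≤ (‖d k‖ * r ^ k) * (1 / 2) := by gcongr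
    _ = 1 / 2 * (‖d k‖ * r ^ k) := by ring

private lemma norm_cpow_pos {x : ℝ} (hx : 0 < x) (w : ℂ) (k : ℕ) :
    ‖((x : ℂ)) ^ (w + k)‖ = x ^ w.re * x ^ k := by
  rw [Complex.norm_cpow_eq_rpow_re_of_pos hx]
  have : (w + (k : ℂ)).re = w.re + (k : ℝ) := by
    simp [Complex.add_re]
  rw [this, Real.rpow_add hx, Real.rpow_natCast]

private lemma summable_S {e : ℕ → ℂ} (hG : GoodCoeff e) (a : ℂ) {x : ℝ} (hx : 0 < x) :
    Summable (fun k => e k * (x : ℂ) ^ (a + k)) := by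
  apply Summable.of_norm
  have := ((hG x hx).mul_left (x ^ a.re)).congr
    (f := fun k => x ^ a.re * (‖e k‖ * x ^ k))
    (g := fun k => ‖e k * (x : ℂ) ^ (a + k)‖) ?_
  · exact this
  · intro k
    show x ^ a.re * (‖e k‖ * x ^ k) = ‖e k * (x : ℂ) ^ (a + k)‖
    rw [norm_mul, norm_cpow_pos hx a k]; ring

private lemma hasDerivAt_cpow_real (w : ℂ) {x : ℝ} (hx : 0 < x) :
    HasDerivAt (fun y : ℝ => (y : ℂ) ^ w) (w * (x : ℂ) ^ (w - 1)) x := by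
  rcases eq_or_ne w 0 with h | h
  · subst h
    simp only [Complex.cpow_zero, zero_mul]
    exact hasDerivAt_const x 1
  · have h' : w - 1 ≠ -1 := by
      intro hh; apply h; linear_combination hh
    have h0 := hasDerivAt_ofReal_cpow_const' hx.ne' h'
    rw [sub_add_cancel] at h0
    have h2 := h0.const_mul w
    have hfun : (fun y : ℝ => w * ((y : ℂ) ^ w / w)) = fun y : ℝ => (y : ℂ) ^ w := by
      funext y; field_simp
    rwa [hfun] at h2

private lemma hasDerivAt_S {e : ℕ → ℂ} (hG : GoodCoeff e) (a : ℂ) {x : ℝ} (hx : 0 < x) :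
    HasDerivAt (fun z : ℝ => ∑' k : ℕ, e k * (z : ℂ) ^ (a + k))
      (∑' k : ℕ, (a + k) * e k * (x : ℂ) ^ (a - 1 + k)) x := by
  have hmem : x ∈ Set.Ioo (x / 2) (2 * x) := ⟨by linarith, by linarith⟩
  set M : ℝ := max ((x / 2) ^ ((a - 1).re)) ((2 * x) ^ ((a - 1).re)) with hMdef
  have hM : 0 < M := lt_max_of_lt_left (Real.rpow_pos_of_pos (by linarith) _)
  have hGa := goodCoeff_mul hG a
  have husum : Summable (fun (k : ℕ) => M * (‖(a + (k : ℂ)) * e k‖ * (2 * x) ^ k)) :=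
    (hGa (2 * x) (by linarith)).mul_left M
  refine hasDerivAt_tsum_of_isPreconnected
    (g := fun (k : ℕ) (z : ℝ) => e k * (z : ℂ) ^ (a + (k : ℂ)))
    (g' := fun (k : ℕ) (y : ℝ) => (a + (k : ℂ)) * e k * (y : ℂ) ^ (a - 1 + (k : ℂ)))
    husum isOpen_Ioo (convex_Ioo _ _).isPreconnected
    (fun k y hy => ?_) (fun k y hy => ?_) hmem (summable_S hG a hx) hmem
  · have hy0 : 0 < y := lt_trans (by linarith) hy.1
    have h1 := (hasDerivAt_cpow_real (a + k) hy0).const_mul (e k)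
    have : a + k - 1 = a - 1 + k := by ring
    rw [this] at h1
    exact h1.congr_deriv (by ring)
  · have hy0 : 0 < y := lt_trans (by linarith) hy.1
    rw [norm_mul, norm_cpow_pos hy0 (a - 1) k]
    have hb1 : y ^ (a - 1).re ≤ M := by
      rcases le_or_gt 0 ((a - 1).re) with hp | hp
      · exact le_trans (Real.rpow_le_rpow hy0.le hy.2.le hp) (le_max_right _ _)
      · exact le_trans (Real.rpow_le_rpow_of_nonpos (by linarith) hy.1.le hp.le)
          (le_max_left _ _)
    have hb2 : y ^ k ≤ (2 * x) ^ k := pow_le_pow_left₀ hy0.le hy.2.le k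
    calc ‖(a + (k : ℂ)) * e k‖ * (y ^ (a - 1).re * y ^ k)
        ≤ ‖(a + (k : ℂ)) * e k‖ * (M * (2 * x) ^ k) := by gcongr
      _ = M * (‖(a + (k : ℂ)) * e k‖ * (2 * x) ^ k) := by ring

/-- Second Frobenius solution: for `Re Λ > 1/2` with `2 - 2Λ` not a
nonpositive integer, `d₀ = 1`, `d_{k+1} = d_k/((k+1)(k+2-2Λ))`, the function
`u z = z^(1-2Λ) Σ d_k z^k` (principal power, `z > 0`) satisfies
`z u'' + 2Λ u' = u` for all `z > 0`. -/
theorem second_frobenius_solution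
    (Λ : ℂ) (hΛ : 1 / 2 < Λ.re) (hΛ' : ∀ m : ℕ, 2 - 2 * Λ ≠ -(m : ℂ))
    (d : ℕ → ℂ) (hd0 : d 0 = 1)
    (hd : ∀ k : ℕ, d (k + 1) = d k / (((k : ℂ) + 1) * ((k : ℂ) + 2 - 2 * Λ)))
    (u : ℝ → ℂ)
    (hu : ∀ z : ℝ, 0 < z →
      u z = (z : ℂ) ^ (1 - 2 * Λ) * ∑' k : ℕ, d k * (z : ℂ) ^ k) :
    ∀ z : ℝ, 0 < z →
      (z : ℂ) * deriv (deriv u) z + 2 * Λ * deriv u z = u z := by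
  intro z hz
  set c : ℂ := 1 - 2 * Λ with hc
  have hGd : GoodCoeff d := goodCoeff_d Λ d hd
  have hGd1 : GoodCoeff (fun k => (c + (k : ℂ)) * d k) := goodCoeff_mul hGd c
  have hGd2 : GoodCoeff (fun k => (c - 1 + (k : ℂ)) * ((c + (k : ℂ)) * d k)) :=
    goodCoeff_mul hGd1 (c - 1)
  have step1 : ∀ y : ℝ, 0 < y → u y = ∑' k : ℕ, d k * (y : ℂ) ^ (c + k) := by
    intro y hy
    have hy0 : (y : ℂ) ≠ 0 := Complex.ofReal_ne_zero.2 hy.ne'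
    rw [hu y hy, ← tsum_mul_left]
    exact tsum_congr fun k => by
      rw [Complex.cpow_add _ _ hy0, Complex.cpow_natCast]; ring
  have hderivu : ∀ y : ℝ, 0 < y →
      deriv u y = ∑' k : ℕ, (c + k) * d k * (y : ℂ) ^ (c - 1 + k) := by
    intro y hy
    have heq : u =ᶠ[nhds y] fun t : ℝ => ∑' k : ℕ, d k * (t : ℂ) ^ (c + k) :=
      Filter.eventuallyEq_of_mem (isOpen_Ioi.mem_nhds hy) (fun t ht => step1 t ht)
    rw [heq.deriv_eq]
    exact (hasDerivAt_S hGd c hy).deriv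
  have hderiv2 : deriv (deriv u) z
      = ∑' k : ℕ, (c - 1 + k) * ((c + k) * d k) * (z : ℂ) ^ (c - 1 - 1 + k) := by
    have heq : deriv u =ᶠ[nhds z]
        fun t : ℝ => ∑' k : ℕ, (c + k) * d k * (t : ℂ) ^ (c - 1 + k) :=
      Filter.eventuallyEq_of_mem (isOpen_Ioi.mem_nhds hz) (fun t ht => hderivu t ht)
    rw [heq.deriv_eq]
    exact (hasDerivAt_S hGd1 (c - 1) hz).deriv
  have hz0 : (z : ℂ) ≠ 0 := Complex.ofReal_ne_zero.2 hz.ne'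
  rw [hderiv2, hderivu z hz, step1 z hz]
  have hS1 : Summable (fun k : ℕ =>
      (z : ℂ) * ((c - 1 + k) * ((c + k) * d k) * (z : ℂ) ^ (c - 1 - 1 + k))) :=
    (summable_S hGd2 (c - 1 - 1) hz).mul_left _
  have hS2 : Summable (fun k : ℕ =>
      2 * Λ * ((c + k) * d k * (z : ℂ) ^ (c - 1 + k))) :=
    (summable_S hGd1 (c - 1) hz).mul_left _
  rw [← tsum_mul_left, ← tsum_mul_left, ← hS1.tsum_add hS2]
  have hterm : ∀ k : ℕ,
      (z : ℂ) * ((c - 1 + k) * ((c + k) * d k) * (z : ℂ) ^ (c - 1 - 1 + k))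
        + 2 * Λ * ((c + k) * d k * (z : ℂ) ^ (c - 1 + k))
      = (k : ℂ) * ((c + k) * d k) * (z : ℂ) ^ (c - 1 + k) := by
    intro k
    have hzz : (z : ℂ) ^ (c - 1 + (k : ℂ)) = (z : ℂ) * (z : ℂ) ^ (c - 1 - 1 + (k : ℂ)) := by
      rw [show c - 1 + (k : ℂ) = 1 + (c - 1 - 1 + k) by ring,
        Complex.cpow_add _ _ hz0, Complex.cpow_one]
    have h1 : (z : ℂ) * ((c - 1 + k) * ((c + k) * d k) * (z : ℂ) ^ (c - 1 - 1 + k))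
        = (c - 1 + k) * ((c + k) * d k) * ((z : ℂ) * (z : ℂ) ^ (c - 1 - 1 + k)) := by
      ring
    rw [h1, ← hzz, hc]
    ring
  rw [tsum_congr hterm]
  have hsum : Summable (fun k : ℕ => (k : ℂ) * ((c + k) * d k) * (z : ℂ) ^ (c - 1 + k)) := by
    have hGk : GoodCoeff (fun k => ((0 : ℂ) + k) * ((c + (k : ℂ)) * d k)) :=
      goodCoeff_mul hGd1 0
    exact (summable_S hGk (c - 1) hz).congr (fun k => by ring)
  rw [hsum.tsum_eq_zero_add]
  simp only [Nat.cast_zero, zero_mul, zero_add, Nat.cast_add, Nat.cast_one]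
  refine tsum_congr fun k => ?_
  have hexp : c - 1 + ((k : ℂ) + 1) = c + k := by ring
  rw [hexp]
  have hco : ((k : ℂ) + 1) * ((c + ((k : ℂ) + 1)) * d (k + 1)) = d k := by
    have h1 : ((k : ℂ) + 1) ≠ 0 := Nat.cast_add_one_ne_zero k
    have h2 : ((k : ℂ) + 2 - 2 * Λ) ≠ 0 := by
      intro h; exact hΛ' k (by linear_combination h)
    rw [hd k, hc]
    field_simp
    ring
  rw [hco]
end
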